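/- arXiv:2404.03467 — 3 statements merged into one kernel-verified Lean document; each statement's English description precedes it below -/
import Mathlib

section
/- Let $U : [-\bar\tau, T] \to H$ be a continuous solution of the Duhamel formula $U(t) = S(t) U_0 + \int_0^t S(t-s) k(s) B U(s-\tau(s)) ds$ on $[0,T]$, with $U = f$ on $[-\bar\tau,0]$, $U_0 = f(0)$, where $\|S(t)\| \le M$, $B$ bounded, $\tau(s) \in [0,\bar\tau]$, and $M \|B\| \int_0^T |k(s)| ds \le 1$. Then for all $t \in [0,T]$, $\|U(t)\| \le e \left( M \|U_0\| + \max_{r \in [-\bar\tau, 0]} \|f(r)\| \right)$. -/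
open Real Set MeasureTheory

lemma duhamel_key_aux {T : ℝ} (g : ℝ → ℝ) (hg0 : ∀ s, 0 ≤ g s)
    (hgi : IntegrableOn g (Ioc 0 T)) : ∀ (j : ℕ),
    ∀ t ∈ Icc (0:ℝ) T,
      ∫ s in Ioc 0 t, g s * (∫ u in Ioc 0 s, g u) ^ j
        = (∫ s in Ioc 0 t, g s) ^ (j + 1) / (j + 1) := by
  set G : ℝ → ℝ := fun x => ∫ u in Ioc 0 x, g u with hGdef
  have hG0 : ∀ x, 0 ≤ G x := fun x =>
    setIntegral_nonneg measurableSet_Ioc fun s _ => hg0 s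
  have hGmono : ∀ a b : ℝ, a ≤ b → b ≤ T → G a ≤ G b := by
    intro a b hab hbT
    exact setIntegral_mono_set (hgi.mono_set (Ioc_subset_Ioc le_rfl hbT))
      (Filter.Eventually.of_forall fun s => hg0 s)
      ((Ioc_subset_Ioc le_rfl hab).eventuallyLE)
  have hGcont : ContinuousOn G (Icc 0 T) :=
    intervalIntegral.continuousOn_primitive
      ((integrableOn_Icc_iff_integrableOn_Ioc).2 hgi)
  -- integrability of g * G^j on subintervals
  have hmul : ∀ (j : ℕ) (t : ℝ), t ≤ T → IntegrableOn (fun s => g s * G s ^ j) (Ioc 0 t) := by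
    intro j t htT
    have h1 : IntegrableOn g (Ioc 0 t) := hgi.mono_set (Ioc_subset_Ioc le_rfl htT)
    have h2 : AEStronglyMeasurable (fun s => G s ^ j) (volume.restrict (Ioc 0 t)) := by
      refine ContinuousOn.aestronglyMeasurable ?_ measurableSet_Ioc
      exact (hGcont.mono (Ioc_subset_Icc_self.trans (Icc_subset_Icc le_rfl htT))).pow j
    have hb : Integrable (fun s => G s ^ j * g s) (volume.restrict (Ioc 0 t)) := by
      refine h1.bdd_mul (c := G T ^ j) h2 ?_
      filter_upwards [ae_restrict_mem measurableSet_Ioc] with s hs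
      rw [Real.norm_eq_abs, abs_of_nonneg (pow_nonneg (hG0 s) j)]
      exact pow_le_pow_left₀ (hG0 s) (hGmono s T (hs.2.trans htT) le_rfl) j
    exact (hb.congr (Filter.Eventually.of_forall fun s => mul_comm _ _))
  intro j
  induction j with
  | zero =>
    intro t ht
    simp only [pow_zero, mul_one, pow_one, Nat.cast_zero, zero_add, div_one]
  | succ j ih =>
    intro t ht
    set μt := volume.restrict (Ioc (0:ℝ) t) with hμt
    have htT : t ≤ T := ht.2
    have hgt : IntegrableOn g (Ioc 0 t) := hgi.mono_set (Ioc_subset_Ioc le_rfl htT)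
    -- the two-variable function
    set Φ : ℝ → ℝ → ℝ := fun s u => (Iic s).indicator (fun v => g s * G s ^ j * g v) u with hΦ
    have hΦint : Integrable (Function.uncurry Φ) (μt.prod μt) := by
      have hmeas : AEStronglyMeasurable (Function.uncurry Φ) (μt.prod μt) := by
        have : Function.uncurry Φ = fun p : ℝ × ℝ =>
            {q : ℝ × ℝ | q.2 ≤ q.1}.indicator (fun q => (g q.1 * G q.1 ^ j) * g q.2) p := by
          funext p
          simp only [Function.uncurry, hΦ, Set.indicator, mem_Iic, mem_setOf_eq]
        rw [this]
        refine AEStronglyMeasurable.indicator ?_ (measurableSet_le measurable_snd measurable_fst)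
        exact ((hmul j t htT).aestronglyMeasurable.comp_fst.mul hgt.aestronglyMeasurable.comp_snd)
      refine Integrable.mono' (g := fun p : ℝ × ℝ => (G T ^ j * g p.1) * g p.2) ?_ hmeas ?_
      · exact (hgt.const_mul _).mul_prod hgt
      · rw [hμt, Measure.prod_restrict]
        filter_upwards [ae_restrict_mem ((measurableSet_Ioc).prod measurableSet_Ioc)] with p hp
        rw [mem_prod] at hp
        rw [Function.uncurry, hΦ]
        simp only [Set.indicator, mem_Iic]
        split
        · have h1 : (0:ℝ) ≤ g p.1 * G p.1 ^ j * g p.2 := by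
            have := hG0 p.1; have := hg0 p.1; have := hg0 p.2; positivity
          rw [Real.norm_eq_abs, abs_of_nonneg h1]
          have hGle : G p.1 ^ j ≤ G T ^ j :=
            pow_le_pow_left₀ (hG0 p.1) (hGmono p.1 T (hp.1.2.trans htT) le_rfl) j
          calc g p.1 * G p.1 ^ j * g p.2 ≤ g p.1 * G T ^ j * g p.2 := by
                have h2 := hg0 p.1; have h3 := hg0 p.2
                nlinarith [mul_le_mul_of_nonneg_left hGle h2,
                  mul_le_mul_of_nonneg_right (mul_le_mul_of_nonneg_left hGle h2) h3]
            _ = G T ^ j * g p.1 * g p.2 := by ring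
        · rw [norm_zero]
          have := hg0 p.1; have := hg0 p.2
          have : (0:ℝ) ≤ G T ^ j := pow_nonneg (hG0 T) j
          positivity
    have hIj : ∀ x ∈ Icc (0:ℝ) T, ∫ s in Ioc 0 x, g s * G s ^ j = G x ^ (j+1) / (j+1) := ih
    -- Step 1: rewrite as double integral
    have step1 : ∫ s in Ioc 0 t, g s * G s ^ (j+1) = ∫ s, (∫ u, Φ s u ∂μt) ∂μt := by
      refine setIntegral_congr_fun measurableSet_Ioc (fun s hs => ?_)
      have hset : Ioc (0:ℝ) t ∩ Iic s = Ioc 0 s := by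
        rw [Set.Ioc_inter_Iic, min_eq_right hs.2]
      rw [hΦ]
      rw [setIntegral_indicator measurableSet_Iic, hset, integral_const_mul]
      show g s * G s ^ (j+1) = g s * G s ^ j * G s
      ring
    -- Step 2: swap
    have step2 : ∫ s, (∫ u, Φ s u ∂μt) ∂μt = ∫ u, (∫ s, Φ s u ∂μt) ∂μt :=
      integral_integral_swap hΦint
    -- Step 3: inner integral
    have step3 : ∀ u ∈ Ioc (0:ℝ) t,
        (∫ s, Φ s u ∂μt) = (G t ^ (j+1) / (j+1) - G u ^ (j+1) / (j+1)) * g u := by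
      intro u hu
      have hΦu : (fun s => Φ s u) = fun s => (Ici u).indicator (fun s' => g s' * G s' ^ j) s * g u := by
        funext s
        rw [hΦ]
        simp only [Set.indicator, mem_Iic, mem_Ici]
        split <;> simp
      rw [hΦu, integral_mul_const, setIntegral_indicator measurableSet_Ici]
      have hset : Ioc (0:ℝ) t ∩ Ici u = Icc u t := by
        ext x
        simp only [mem_inter_iff, mem_Ioc, mem_Ici, mem_Icc]
        constructor
        · rintro ⟨⟨_, h2⟩, h3⟩; exact ⟨h3, h2⟩
        · rintro ⟨h1, h2⟩; exact ⟨⟨lt_of_lt_of_le hu.1 h1, h2⟩, h1⟩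
      rw [hset, integral_Icc_eq_integral_Ioc]
      have hsplit : ∫ s in Ioc 0 t, g s * G s ^ j
          = (∫ s in Ioc 0 u, g s * G s ^ j) + ∫ s in Ioc u t, g s * G s ^ j := by
        rw [← MeasureTheory.setIntegral_union (Set.Ioc_disjoint_Ioc_of_le le_rfl) measurableSet_Ioc
          ((hmul j t htT).mono_set (Ioc_subset_Ioc le_rfl hu.2))
          ((hmul j t htT).mono_set (Ioc_subset_Ioc hu.1.le le_rfl)),
          Set.Ioc_union_Ioc_eq_Ioc hu.1.le hu.2]
      have h1 := hIj t ht
      have h2 := hIj u ⟨hu.1.le, hu.2.trans htT⟩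
      have : ∫ s in Ioc u t, g s * G s ^ j = G t ^ (j+1)/(j+1) - G u ^ (j+1)/(j+1) := by
        rw [h1, h2] at hsplit; linarith
      rw [this]
    -- Step 4: outer integral
    have step4 : ∫ u, (∫ s, Φ s u ∂μt) ∂μt
        = G t ^ (j+1)/(j+1) * G t - (∫ s in Ioc 0 t, g s * G s ^ (j+1)) / (j+1) := by
      rw [show (∫ u, (∫ s, Φ s u ∂μt) ∂μt)
          = ∫ u in Ioc 0 t, (G t ^ (j+1) / (j+1) - G u ^ (j+1) / (j+1)) * g u from
        setIntegral_congr_fun measurableSet_Ioc step3]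
      have hint1 : IntegrableOn (fun u => G t ^ (j+1)/(j+1) * g u) (Ioc 0 t) :=
        hgt.const_mul _
      have hint2 : IntegrableOn (fun u => G u ^ (j+1)/(j+1) * g u) (Ioc 0 t) := by
        have := (hmul (j+1) t htT).const_mul (1/((j:ℝ)+1))
        refine this.congr (Filter.Eventually.of_forall fun u => ?_)
        push_cast
        ring
      calc ∫ u in Ioc 0 t, (G t ^ (j+1)/(j+1) - G u ^ (j+1)/(j+1)) * g u
          = ∫ u in Ioc 0 t, (G t ^ (j+1)/(j+1) * g u - G u ^ (j+1)/(j+1) * g u) := by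
            congr 1; funext u; ring
        _ = (∫ u in Ioc 0 t, G t ^ (j+1)/(j+1) * g u)
            - ∫ u in Ioc 0 t, G u ^ (j+1)/(j+1) * g u := integral_sub hint1 hint2
        _ = G t ^ (j+1)/(j+1) * G t - (∫ s in Ioc 0 t, g s * G s ^ (j+1)) / (j+1) := by
            rw [integral_const_mul]
            congr 1
            rw [← integral_div]
            congr 1
            funext u
            show G u ^ (j+1) / ((j:ℝ)+1) * g u = g u * G u ^ (j+1) / ((j:ℝ)+1)
            ring
    -- solve the equation
    have heq : ∫ s in Ioc 0 t, g s * G s ^ (j+1)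
        = G t ^ (j+1)/((j:ℝ)+1) * G t - (∫ s in Ioc 0 t, g s * G s ^ (j+1)) / ((j:ℝ)+1) :=
      step1.trans (step2.trans step4)
    set x := ∫ s in Ioc 0 t, g s * G s ^ (j+1) with hx
    have hc : (0:ℝ) < (j:ℝ)+1 := by positivity
    have h2 : x * ((j:ℝ)+1+1) = G t ^ (j+1) * G t := by
      field_simp at heq
      linarith
    push_cast
    rw [eq_div_iff (by positivity)]
    rw [h2, pow_succ]
    show G t ^ j * G t * G t = G t ^ (j+1+1)
    ring

/-- A priori bound on the solution of the Duhamel formula under the smallness condition. -/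
theorem stmt_7 {H : Type*} [NormedAddCommGroup H] [NormedSpace ℝ H] [CompleteSpace H]
    (M τb T : ℝ) (hM : 1 ≤ M) (hτb : 0 < τb) (hT : 0 < T)
    (S : ℝ → H →L[ℝ] H) (hS : ∀ t ≥ (0:ℝ), ‖S t‖ ≤ M)
    (B : H →L[ℝ] H)
    (k : ℝ → ℝ) (hk : IntervalIntegrable k volume 0 T)
    (hsmall : M * ‖B‖ * ∫ s in (0:ℝ)..T, |k s| ≤ 1)
    (τ : ℝ → ℝ) (hτrange : ∀ s ∈ Icc (0:ℝ) T, τ s ∈ Icc (0:ℝ) τb)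
    (f : ℝ → H) (hf : ContinuousOn f (Icc (-τb) (0:ℝ)))
    (U : ℝ → H) (hU : ContinuousOn U (Icc (-τb) T))
    (hhist : ∀ s ∈ Icc (-τb) (0:ℝ), U s = f s)
    (hduh : ∀ t ∈ Icc (0:ℝ) T,
      U t = S t (f 0) + ∫ s in (0:ℝ)..t, k s • (S (t - s)) (B (U (s - τ s)))) :
    ∀ t ∈ Icc (0:ℝ) T,
      ‖U t‖ ≤ Real.exp 1 * (M * ‖f 0‖ + ⨆ r ∈ Icc (-τb) (0:ℝ), ‖f r‖) := by
  set g : ℝ → ℝ := fun s => M * ‖B‖ * |k s| with hgdef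
  have hg0 : ∀ s, 0 ≤ g s := fun s => by
    have : (0:ℝ) ≤ M := le_trans zero_le_one hM
    positivity
  have hgi : IntegrableOn g (Ioc 0 T) := by
    have := (hk.abs.const_mul (M * ‖B‖))
    exact (intervalIntegrable_iff_integrableOn_Ioc_of_le hT.le).1 this
  set G : ℝ → ℝ := fun x => ∫ u in Ioc 0 x, g u with hGdef
  have hG0 : ∀ x, 0 ≤ G x := fun x =>
    setIntegral_nonneg measurableSet_Ioc fun s _ => hg0 s
  have hGmono : ∀ a b : ℝ, a ≤ b → b ≤ T → G a ≤ G b := by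
    intro a b hab hbT
    exact setIntegral_mono_set (hgi.mono_set (Ioc_subset_Ioc le_rfl hbT))
      (Filter.Eventually.of_forall fun s => hg0 s)
      ((Ioc_subset_Ioc le_rfl hab).eventuallyLE)
  have hGcont : ContinuousOn G (Icc 0 T) :=
    intervalIntegral.continuousOn_primitive
      ((integrableOn_Icc_iff_integrableOn_Ioc).2 hgi)
  have hGT : G T ≤ 1 := by
    have h1 : G T = M * ‖B‖ * ∫ s in Ioc 0 T, |k s| := integral_const_mul _ _
    rw [h1, ← intervalIntegral.integral_of_le hT.le]
    exact hsmall
  have hmul : ∀ (j : ℕ) (t : ℝ), t ≤ T → IntegrableOn (fun s => g s * G s ^ j) (Ioc 0 t) := by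
    intro j t htT
    have h1 : IntegrableOn g (Ioc 0 t) := hgi.mono_set (Ioc_subset_Ioc le_rfl htT)
    have h2 : AEStronglyMeasurable (fun s => G s ^ j) (volume.restrict (Ioc 0 t)) := by
      refine ContinuousOn.aestronglyMeasurable ?_ measurableSet_Ioc
      exact (hGcont.mono (Ioc_subset_Icc_self.trans (Icc_subset_Icc le_rfl htT))).pow j
    have hb : Integrable (fun s => G s ^ j * g s) (volume.restrict (Ioc 0 t)) := by
      refine h1.bdd_mul (c := G T ^ j) h2 ?_
      filter_upwards [ae_restrict_mem measurableSet_Ioc] with s hs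
      rw [Real.norm_eq_abs, abs_of_nonneg (pow_nonneg (hG0 s) j)]
      exact pow_le_pow_left₀ (hG0 s) (hGmono s T (hs.2.trans htT) le_rfl) j
    exact hb.congr (Filter.Eventually.of_forall fun s => mul_comm _ _)
  have hkey := duhamel_key_aux g hg0 hgi
  -- constants
  set F : ℝ := ⨆ r ∈ Icc (-τb) (0:ℝ), ‖f r‖ with hFdef
  have hF0 : 0 ≤ F := Real.iSup_nonneg fun r => Real.iSup_nonneg fun _ => norm_nonneg _
  obtain ⟨Cf, hCf⟩ := isCompact_Icc.exists_bound_of_continuousOn hf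
  have hfF : ∀ r ∈ Icc (-τb) (0:ℝ), ‖f r‖ ≤ F := by
    intro r hr
    have hbdd : BddAbove (Set.range fun r => ⨆ _ : r ∈ Icc (-τb) (0:ℝ), ‖f r‖) := by
      refine ⟨max Cf 0, ?_⟩
      rintro x ⟨r, rfl⟩
      exact Real.iSup_le (fun hr' => (hCf r hr').trans (le_max_left _ _)) (le_max_right _ _)
    have h1 : ‖f r‖ = ⨆ _ : r ∈ Icc (-τb) (0:ℝ), ‖f r‖ := (ciSup_pos (f := fun _ => ‖f r‖) hr).symm
    rw [h1]
    exact le_ciSup hbdd r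
  set A : ℝ := M * ‖f 0‖ + F with hAdef
  have hM0 : (0:ℝ) ≤ M := le_trans zero_le_one hM
  have hA0 : 0 ≤ A := by positivity
  have hFA : F ≤ A := by
    have : 0 ≤ M * ‖f 0‖ := by positivity
    linarith
  -- global bound C
  have hne : (Icc (-τb) T).Nonempty := ⟨0, by constructor <;> linarith⟩
  obtain ⟨C0, hC0'⟩ := isCompact_Icc.exists_bound_of_continuousOn hU
  set C : ℝ := max C0 0 with hCdef
  have hC : ∀ y ∈ Icc (-τb) T, ‖U y‖ ≤ C := fun y hy => (hC0' y hy).trans (le_max_left _ _)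
  have hC0 : 0 ≤ C := le_max_right _ _
  have hFC : F ≤ C := by
    refine Real.iSup_le (fun r => Real.iSup_le (fun hr => ?_) hC0) hC0
    rw [← hhist r hr]
    exact hC r ⟨hr.1, hr.2.trans hT.le⟩
  -- main induction
  have MAIN : ∀ n : ℕ, ∀ t ∈ Icc (0:ℝ) T,
      ‖U t‖ ≤ A * ∑ j ∈ Finset.range n, G t ^ j / (j.factorial : ℝ)
        + C * (G t ^ n / (n.factorial : ℝ)) := by
    intro n
    induction n with
    | zero =>
      intro t ht
      simp only [Finset.range_zero, Finset.sum_empty, mul_zero, zero_add, pow_zero,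
        Nat.factorial_zero, Nat.cast_one, div_one, mul_one]
      exact hC t ⟨le_trans (by linarith) ht.1, ht.2⟩
    | succ n ih =>
      intro t ht
      have htT : t ≤ T := ht.2
      set P : ℝ → ℝ := fun x =>
        A * ∑ j ∈ Finset.range n, G x ^ j / (j.factorial : ℝ)
          + C * (G x ^ n / (n.factorial : ℝ)) with hP
      have hPmono : ∀ a b : ℝ, 0 ≤ G a → G a ≤ G b → P a ≤ P b := by
        intro a b h0 hab
        simp only [hP]
        refine add_le_add (mul_le_mul_of_nonneg_left (Finset.sum_le_sum fun j _ => ?_) hA0)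
          (mul_le_mul_of_nonneg_left ?_ hC0)
        · exact div_le_div_of_nonneg_right (pow_le_pow_left₀ h0 hab j) (by positivity)
        · exact div_le_div_of_nonneg_right (pow_le_pow_left₀ h0 hab n) (by positivity)
      -- bound on the delayed term
      have hUb : ∀ s ∈ Ioc (0:ℝ) t, ‖U (s - τ s)‖ ≤ P s := by
        intro s hs
        have hsIcc : s ∈ Icc (0:ℝ) T := ⟨hs.1.le, hs.2.trans htT⟩
        have hτs := hτrange s hsIcc
        have hlow : -τb ≤ s - τ s := by
          have := hs.1.le; have := hτs.2; linarith
        have hFP : F ≤ P s := by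
          rcases Nat.eq_zero_or_pos n with hn | hn
          · subst hn
            simp only [hP]
            simp only [Finset.range_zero, Finset.sum_empty, mul_zero, zero_add, pow_zero,
              Nat.factorial_zero, Nat.cast_one, div_one, mul_one]
            exact hFC
          · have hsum : (1:ℝ) ≤ ∑ j ∈ Finset.range n, G s ^ j / (j.factorial : ℝ) := by
              have h0 : G s ^ 0 / ((Nat.factorial 0 : ℕ) : ℝ)
                  ≤ ∑ j ∈ Finset.range n, G s ^ j / (j.factorial : ℝ) :=
                Finset.single_le_sum (f := fun j => G s ^ j / (j.factorial : ℝ))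
                  (fun i _ => by positivity) (Finset.mem_range.2 hn)
              simpa using h0
            have h1 : A * 1 ≤ A * ∑ j ∈ Finset.range n, G s ^ j / (j.factorial : ℝ) :=
              mul_le_mul_of_nonneg_left hsum hA0
            have h2 : 0 ≤ C * (G s ^ n / (n.factorial : ℝ)) := by positivity
            simp only [hP]; linarith
        rcases le_or_gt (s - τ s) 0 with hneg | hpos
        · rw [hhist _ ⟨hlow, hneg⟩]
          exact (hfF _ ⟨hlow, hneg⟩).trans hFP
        · have hmem : s - τ s ∈ Icc (0:ℝ) T := by
            constructor
            · exact hpos.le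
            · have := hτs.1; have := hsIcc.2; linarith
          refine (ih _ hmem).trans ?_
          exact hPmono _ _ (hG0 _) (hGmono _ _ (by have := hτs.1; linarith) hsIcc.2)
      -- integrability of g * P
      have hPcont : ContinuousOn P (Icc 0 T) := by
        rw [hP]
        refine ContinuousOn.add (continuousOn_const.mul ?_) (continuousOn_const.mul ?_)
        · exact continuousOn_finset_sum _ fun j _ => (hGcont.pow j).div_const _
        · exact (hGcont.pow n).div_const _
      have hPint : IntegrableOn (fun s => g s * P s) (Ioc 0 t) := by
        have h1 : IntegrableOn g (Ioc 0 t) := hgi.mono_set (Ioc_subset_Ioc le_rfl htT)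
        have h2 : AEStronglyMeasurable P (volume.restrict (Ioc 0 t)) :=
          ContinuousOn.aestronglyMeasurable
            (hPcont.mono (Ioc_subset_Icc_self.trans (Icc_subset_Icc le_rfl htT)))
            measurableSet_Ioc
        have hb : Integrable (fun s => P s * g s) (volume.restrict (Ioc 0 t)) := by
          refine h1.bdd_mul (c := P T) h2 ?_
          filter_upwards [ae_restrict_mem measurableSet_Ioc] with s hs
          have hps : 0 ≤ P s := by
            simp only [hP]
            have h1 : (0:ℝ) ≤ ∑ j ∈ Finset.range n, G s ^ j / (j.factorial : ℝ) :=
              Finset.sum_nonneg fun j _ => by positivity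
            have h2 : (0:ℝ) ≤ G s ^ n / (n.factorial : ℝ) := by positivity
            positivity
          rw [Real.norm_eq_abs, abs_of_nonneg hps]
          exact hPmono s T (hG0 s) (hGmono s T (hs.2.trans htT) le_rfl)
        exact hb.congr (Filter.Eventually.of_forall fun s => mul_comm _ _)
      -- the basic estimate
      have hest : ‖U t‖ ≤ M * ‖f 0‖ + ∫ s in Ioc 0 t, g s * P s := by
        rw [hduh t ht]
        refine (norm_add_le _ _).trans (add_le_add ?_ ?_)
        · exact le_trans ((S t).le_opNorm _)
            (mul_le_mul_of_nonneg_right (hS t ht.1) (norm_nonneg _))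
        · rw [intervalIntegral.integral_of_le ht.1]
          refine le_trans (norm_integral_le_integral_norm _) ?_
          refine integral_mono_of_nonneg
            (Filter.Eventually.of_forall fun s => norm_nonneg _) hPint ?_
          filter_upwards [ae_restrict_mem measurableSet_Ioc] with s hs
          have hts : (0:ℝ) ≤ t - s := by have := hs.2; linarith
          have h2 : ‖(S (t-s)) (B (U (s - τ s)))‖ ≤ M * (‖B‖ * ‖U (s - τ s)‖) := by
            refine le_trans ((S (t-s)).le_opNorm _) ?_
            refine mul_le_mul (hS _ hts) (B.le_opNorm _) (norm_nonneg _) hM0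
          have hps : 0 ≤ P s := by
            simp only [hP]
            have h1 : (0:ℝ) ≤ ∑ j ∈ Finset.range n, G s ^ j / (j.factorial : ℝ) :=
              Finset.sum_nonneg fun j _ => by positivity
            have h2 : (0:ℝ) ≤ G s ^ n / (n.factorial : ℝ) := by positivity
            positivity
          calc ‖k s • (S (t - s)) (B (U (s - τ s)))‖
              = |k s| * ‖(S (t-s)) (B (U (s - τ s)))‖ := by
                rw [norm_smul, Real.norm_eq_abs]
            _ ≤ |k s| * (M * (‖B‖ * ‖U (s - τ s)‖)) :=
                mul_le_mul_of_nonneg_left h2 (abs_nonneg _)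
            _ ≤ |k s| * (M * (‖B‖ * P s)) := by
                have hB0 : (0:ℝ) ≤ ‖B‖ := norm_nonneg _
                exact mul_le_mul_of_nonneg_left (mul_le_mul_of_nonneg_left
                  (mul_le_mul_of_nonneg_left (hUb s hs) hB0) hM0) (abs_nonneg _)
            _ = g s * P s := by rw [hgdef]; ring
      -- compute the integral of g * P
      have hcomp : ∫ s in Ioc 0 t, g s * P s
          = A * ∑ j ∈ Finset.range n, G t ^ (j+1) / ((j+1).factorial : ℝ)
            + C * (G t ^ (n+1) / ((n+1).factorial : ℝ)) := by
        have hrw : (fun s => g s * P s) = fun s =>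
            (∑ j ∈ Finset.range n, (A / (j.factorial : ℝ)) * (g s * G s ^ j))
              + (C / (n.factorial : ℝ)) * (g s * G s ^ n) := by
          funext s
          simp only [hP]
          rw [mul_add, Finset.mul_sum, Finset.mul_sum]
          congr 1
          · refine Finset.sum_congr rfl fun j _ => ?_
            ring
          · ring
        rw [hrw]
        have hintsum : Integrable
            (fun s => ∑ j ∈ Finset.range n, (A / (j.factorial : ℝ)) * (g s * G s ^ j))
            (volume.restrict (Ioc 0 t)) :=
          integrable_finset_sum _ fun j _ => (hmul j t htT).const_mul _
        have hintlast : Integrable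
            (fun s => (C / (n.factorial : ℝ)) * (g s * G s ^ n))
            (volume.restrict (Ioc 0 t)) := (hmul n t htT).const_mul _
        rw [integral_add hintsum hintlast, integral_finset_sum _
          (fun j _ => (hmul j t htT).const_mul _)]
        have hterm : ∀ (a : ℝ) (j : ℕ),
            (a / (j.factorial : ℝ)) * (G t ^ (j+1) / ((j:ℝ)+1))
              = a * (G t ^ (j+1) / (((j+1).factorial : ℕ) : ℝ)) := by
          intro a j
          have hfact : ((j.factorial : ℝ)) * ((j:ℝ)+1) = (((j+1).factorial : ℕ) : ℝ) := by
            rw [Nat.factorial_succ]; push_cast; ring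
          rw [div_mul_div_comm, hfact, mul_div_assoc]
        congr 1
        · rw [Finset.mul_sum]
          refine Finset.sum_congr rfl fun j _ => ?_
          rw [integral_const_mul, hkey j t ht]
          exact hterm A j
        · rw [integral_const_mul, hkey n t ht]
          exact hterm C n
      -- assemble
      have hshift : ∑ j ∈ Finset.range (n+1), G t ^ j / (j.factorial : ℝ)
          = (∑ j ∈ Finset.range n, G t ^ (j+1) / ((j+1).factorial : ℝ)) + 1 := by
        rw [Finset.sum_range_succ']
        simp
      have hf0A : M * ‖f 0‖ ≤ A := by rw [hAdef]; linarith
      rw [hshift]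
      have hsum0 : 0 ≤ ∑ j ∈ Finset.range n, G t ^ (j+1) / ((j+1).factorial : ℝ) := by
        positivity
      calc ‖U t‖ ≤ M * ‖f 0‖ + ∫ s in Ioc 0 t, g s * P s := hest
        _ = M * ‖f 0‖ + (A * ∑ j ∈ Finset.range n, G t ^ (j+1) / ((j+1).factorial : ℝ)
            + C * (G t ^ (n+1) / ((n+1).factorial : ℝ))) := by rw [hcomp]
        _ ≤ A * ((∑ j ∈ Finset.range n, G t ^ (j+1) / ((j+1).factorial : ℝ)) + 1)
            + C * (G t ^ (n+1) / ((n+1).factorial : ℝ)) := by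
          have : A * ((∑ j ∈ Finset.range n, G t ^ (j+1) / ((j+1).factorial : ℝ)) + 1)
              = A * (∑ j ∈ Finset.range n, G t ^ (j+1) / ((j+1).factorial : ℝ)) + A := by ring
          rw [this]
          linarith
  -- final limit argument
  intro t ht
  have hGt1 : G t ≤ 1 := (hGmono t T ht.2 le_rfl).trans hGT
  have hexp : ∀ n : ℕ, ‖U t‖ ≤ A * Real.exp (G t) + C * (1 / (n.factorial : ℝ)) := by
    intro n
    refine (MAIN n t ht).trans ?_
    have h1 : ∑ j ∈ Finset.range n, G t ^ j / (j.factorial : ℝ) ≤ Real.exp (G t) :=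
      Real.sum_le_exp_of_nonneg (hG0 t) n
    have h2 : G t ^ n ≤ 1 := pow_le_one₀ (hG0 t) hGt1
    have h3 : C * (G t ^ n / (n.factorial : ℝ)) ≤ C * (1 / (n.factorial : ℝ)) := by
      have hn : (0:ℝ) < (n.factorial : ℝ) := Nat.cast_pos.2 n.factorial_pos
      gcongr
    have h4 : A * (∑ j ∈ Finset.range n, G t ^ j / (j.factorial : ℝ)) ≤ A * Real.exp (G t) :=
      mul_le_mul_of_nonneg_left h1 hA0
    linarith
  have hlim : Filter.Tendsto (fun n : ℕ => A * Real.exp (G t) + C * (1 / (n.factorial : ℝ)))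
      Filter.atTop (nhds (A * Real.exp (G t))) := by
    have h0 : Filter.Tendsto (fun n : ℕ => (1:ℝ) ^ n / (n.factorial : ℝ))
        Filter.atTop (nhds 0) := FloorSemiring.tendsto_pow_div_factorial_atTop (1:ℝ)
    have h1 : Filter.Tendsto (fun n : ℕ => (1:ℝ) / (n.factorial : ℝ))
        Filter.atTop (nhds 0) := by simpa using h0
    have h2 := h1.const_mul C
    have h3 := (tendsto_const_nhds (x := A * Real.exp (G t)) (f := Filter.atTop)).add h2
    simpa using h3
  have hfin : ‖U t‖ ≤ A * Real.exp (G t) :=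
    ge_of_tendsto' hlim hexp
  calc ‖U t‖ ≤ A * Real.exp (G t) := hfin
    _ ≤ A * Real.exp 1 := mul_le_mul_of_nonneg_left (Real.exp_le_exp.2 hGt1) hA0
    _ = Real.exp 1 * (M * ‖f 0‖ + F) := by rw [hAdef]; ring
end

section
/- Let $H$ be a Banach space and let $U : [-\bar\tau, \infty) \to H$ be a continuous solution of the Duhamel identity $U(t) = S(t)U_0 + \int_0^t S(t-s) k(s) B U(s - \tau(s)) ds$ for all $t \ge 0$, with $U = f$ on $[-\bar\tau, 0]$, $U_0 = f(0)$. Assume $\|S(t)\| \le M e^{-\omega t}$, $B$ bounded linear, $\tau(t) \in [0,\bar\tau]$ continuous, $\int_{t-\bar\tau}^t |k(s)| ds \le K$ for all $t \ge 0$, and $M \|B\| e^{\omega \bar\tau} \int_0^t |k(s)| ds \le \gamma + \omega' t$ for all $t \ge 0$, with $\gamma \ge 0$, $0 \le \omega' < \omega$. Then $\|U(t)\| \le M e^{\gamma} \left( \|U_0\| + e^{\omega \bar\tau} K \|B\| \max_{s \in [-\bar\tau, 0]} \{ e^{\omega s} \|f(s)\| \} \right) e^{-(\omega - \omega') t}$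 for all $t \ge 0$. -/
open Real Set MeasureTheory Filter Topology

/-- Lebesgue differentiation along right intervals of length 1/(n+1). -/
theorem ae_tendsto_avg_right (β : ℝ → ℝ) (hloc : LocallyIntegrable β volume) :
    ∀ᵐ x : ℝ, Tendsto (fun n : ℕ => ((n:ℝ)+1) * ∫ t in x..(x + 1/((n:ℝ)+1)), β t)
      atTop (𝓝 (β x)) := by
  filter_upwards [(IsUnifLocDoublingMeasure.vitaliFamily (volume : Measure ℝ) 1).ae_tendsto_average
    hloc] with x hx
  have hseq : Tendsto (fun n : ℕ => x + 1/((n:ℝ)+1)) atTop (𝓝[>] x) := by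
    apply tendsto_nhdsWithin_of_tendsto_nhds_of_eventually_within
    · have := tendsto_one_div_add_atTop_nhds_zero_nat (𝕜 := ℝ)
      have h2 := (tendsto_const_nhds (x := x) (f := atTop (α := ℕ))).add this
      simpa using h2
    · filter_upwards with n
      have : (0:ℝ) < 1/((n:ℝ)+1) := by positivity
      simp [Set.mem_Ioi]; linarith
  have h1 : Tendsto (fun n : ℕ => ⨍ t in Icc x (x + 1/((n:ℝ)+1)), β t) atTop (𝓝 (β x)) :=
    hx.comp ((Real.tendsto_Icc_vitaliFamily_right x).comp hseq)
  apply h1.congr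
  intro n
  have hδ : (0:ℝ) < 1/((n:ℝ)+1) := by positivity
  rw [setAverage_eq, integral_Icc_eq_integral_Ioc,
    ← intervalIntegral.integral_of_le (by linarith), measureReal_def, Real.volume_Icc]
  rw [ENNReal.toReal_ofReal (by linarith)]
  simp only [smul_eq_mul]
  have : x + 1/((n:ℝ)+1) - x = 1/((n:ℝ)+1) := by ring
  rw [this, one_div, inv_inv]

theorem gronwall_exp_integral (β : ℝ → ℝ) (hβ : ∀ a b : ℝ, IntervalIntegrable β volume a b)
    (hβ0 : ∀ s, 0 ≤ β s) (T : ℝ) (hT : 0 ≤ T) :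
    ∫ s in (0:ℝ)..T, β s * Real.exp (∫ u in (0:ℝ)..s, β u) ≤
      Real.exp (∫ u in (0:ℝ)..T, β u) - 1 := by
  have hloc : LocallyIntegrable β volume := by
    intro x
    exact ⟨Set.Ioo (x-1) (x+1), Ioo_mem_nhds (by linarith) (by linarith),
      ((hβ (x-1) (x+1)).1).mono_set Set.Ioo_subset_Ioc_self⟩
  set Λ : ℝ → ℝ := fun t => ∫ u in (0:ℝ)..t, β u with hΛdef
  have hΛcont : Continuous Λ := intervalIntegral.continuous_primitive hβ 0
  have hΛadd : ∀ x y : ℝ, Λ y - Λ x = ∫ u in x..y, β u := by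
    intro x y
    have := intervalIntegral.integral_add_adjacent_intervals (hβ 0 x) (hβ x y)
    simp only [hΛdef]; linarith
  have hint_nonneg : ∀ x y : ℝ, x ≤ y → 0 ≤ ∫ u in x..y, β u := fun x y h =>
    intervalIntegral.integral_nonneg h (fun u _ => hβ0 u)
  have hΛmono : Monotone Λ := by
    intro x y hxy
    have h1 := hΛadd x y
    have h2 := hint_nonneg x y hxy
    linarith
  set g : ℝ → ℝ := fun t => Real.exp (Λ t) with hgdef
  have hgcont : Continuous g := Real.continuous_exp.comp hΛcont
  have hgmono : Monotone g := fun x y h => Real.exp_le_exp.2 (hΛmono h)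
  have hg0 : g 0 = 1 := by simp [hgdef, hΛdef]
  have hgpos : ∀ t, 0 < g t := fun t => Real.exp_pos _
  -- key pointwise inequality
  have hkey : ∀ x δ : ℝ, 0 ≤ δ → g x * ∫ u in x..(x+δ), β u ≤ g (x+δ) - g x := by
    intro x δ hδ
    have h1 : g (x+δ) = g x * Real.exp (∫ u in x..(x+δ), β u) := by
      rw [hgdef]
      simp only
      rw [← hΛadd x (x+δ)]
      rw [← Real.exp_add]
      ring_nf
    have h2 := Real.add_one_le_exp (∫ u in x..(x+δ), β u)
    nlinarith [hgpos x]
  set δ : ℕ → ℝ := fun n => 1/((n:ℝ)+1) with hδdef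
  have hδpos : ∀ n, 0 < δ n := fun n => by positivity
  set h : ℕ → ℝ → ℝ := fun n x => ((n:ℝ)+1) * (g (x + δ n) - g x) with hhdef
  have hhcont : ∀ n, Continuous (h n) := by
    intro n
    exact continuous_const.mul ((hgcont.comp (continuous_id.add continuous_const)).sub hgcont)
  have hh0 : ∀ n x, 0 ≤ h n x := by
    intro n x
    have h1 : g x ≤ g (x + δ n) := hgmono (le_add_of_nonneg_right (hδpos n).le)
    have h2 : (0:ℝ) ≤ (n:ℝ)+1 := by positivity
    simp only [hhdef]
    nlinarith
  -- step 4 : bound on the integral of h n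
  have hstep4 : ∀ n, ∫ x in (0:ℝ)..T, h n x ≤ g (T + δ n) - 1 := by
    intro n
    have hgint : ∀ a b : ℝ, IntervalIntegrable g volume a b := fun a b =>
      hgcont.intervalIntegrable a b
    have hgint' : ∀ a b : ℝ, IntervalIntegrable (fun x => g (x + δ n)) volume a b := fun a b =>
      (hgcont.comp (continuous_id.add continuous_const)).intervalIntegrable a b
    have e1 : ∫ x in (0:ℝ)..T, g (x + δ n) = ∫ x in (0+δ n)..(T+δ n), g x :=
      intervalIntegral.integral_comp_add_right g (δ n)
    have e2 : ∫ x in (0:ℝ)..T, h n x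
        = ((n:ℝ)+1) * ((∫ x in (0:ℝ)..T, g (x + δ n)) - ∫ x in (0:ℝ)..T, g x) := by
      rw [← intervalIntegral.integral_sub (hgint' 0 T) (hgint 0 T)]
      rw [← intervalIntegral.integral_const_mul]
    have e3 : (∫ x in (δ n)..(T+δ n), g x) - ∫ x in (0:ℝ)..T, g x
        = (∫ x in T..(T+δ n), g x) - ∫ x in (0:ℝ)..(δ n), g x := by
      have a1 := intervalIntegral.integral_add_adjacent_intervals (hgint (δ n) T) (hgint T (T + δ n))
      have a2 := intervalIntegral.integral_add_adjacent_intervals (hgint 0 (δ n)) (hgint (δ n) T)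
      linarith
    have b1 : ∫ x in T..(T+δ n), g x ≤ δ n * g (T + δ n) := by
      have := intervalIntegral.integral_mono_on (le_add_of_nonneg_right (hδpos n).le)
        (hgint T (T + δ n)) (intervalIntegrable_const) (fun x hx => hgmono hx.2)
      simpa using this
    have b2 : δ n * 1 ≤ ∫ x in (0:ℝ)..(δ n), g x := by
      have := intervalIntegral.integral_mono_on (f := fun _ => (1:ℝ)) (hδpos n).le
        (intervalIntegrable_const) (hgint 0 (δ n)) (fun x hx => hg0 ▸ hgmono hx.1)
      simpa using this
    have hn1 : (0:ℝ) < (n:ℝ)+1 := by positivity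
    have hδn : ((n:ℝ)+1) * δ n = 1 := by
      rw [hδdef]; field_simp
    calc ∫ x in (0:ℝ)..T, h n x
        = ((n:ℝ)+1) * ((∫ x in T..(T+δ n), g x) - ∫ x in (0:ℝ)..(δ n), g x) := by
          rw [e2, e1]; rw [zero_add]; rw [e3]
      _ ≤ ((n:ℝ)+1) * (δ n * g (T + δ n) - δ n * 1) := by
          apply mul_le_mul_of_nonneg_left _ hn1.le
          linarith
      _ = g (T + δ n) - 1 := by
          have : ((n:ℝ)+1) * (δ n * g (T + δ n) - δ n * 1)
              = (((n:ℝ)+1) * δ n) * g (T + δ n) - (((n:ℝ)+1) * δ n) := by ring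
          rw [this, hδn]; ring
  -- Lebesgue differentiation: liminf lower bound
  have hae : ∀ᵐ x : ℝ, ENNReal.ofReal (β x * g x) ≤
      Filter.liminf (fun n => ENNReal.ofReal (h n x)) atTop := by
    filter_upwards [ae_tendsto_avg_right β hloc] with x hx
    have hge : ∀ n : ℕ, g x * (((n:ℝ)+1) * ∫ t in x..(x + δ n), β t) ≤ h n x := by
      intro n
      have hk := hkey x (δ n) (hδpos n).le
      have hn1 : (0:ℝ) ≤ (n:ℝ)+1 := by positivity
      simp only [hhdef]
      nlinarith
    have htends : Tendsto (fun n : ℕ => g x * (((n:ℝ)+1) * ∫ t in x..(x + δ n), β t)) atTop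
        (𝓝 (g x * β x)) := tendsto_const_nhds.mul hx
    calc ENNReal.ofReal (β x * g x)
        = liminf (fun n : ℕ => ENNReal.ofReal (g x * (((n:ℝ)+1) * ∫ t in x..(x+δ n), β t))) atTop := by
          have h2 := ((ENNReal.continuous_ofReal.tendsto _).comp htends).liminf_eq
          simp only [Function.comp_def] at h2
          rw [mul_comm (β x) (g x), ← h2]
      _ ≤ liminf (fun n => ENNReal.ofReal (h n x)) atTop :=
          liminf_le_liminf (Eventually.of_forall fun n => ENNReal.ofReal_le_ofReal (hge n))
  have hchain : ∫⁻ x in Ioc 0 T, ENNReal.ofReal (β x * g x) ≤ ENNReal.ofReal (g T - 1) := by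
    calc ∫⁻ x in Ioc 0 T, ENNReal.ofReal (β x * g x)
        ≤ ∫⁻ x in Ioc 0 T, liminf (fun n => ENNReal.ofReal (h n x)) atTop :=
          lintegral_mono_ae (ae_restrict_of_ae hae)
      _ ≤ liminf (fun n => ∫⁻ x in Ioc 0 T, ENNReal.ofReal (h n x)) atTop :=
          lintegral_liminf_le (fun n => ENNReal.measurable_ofReal.comp (hhcont n).measurable)
      _ ≤ liminf (fun n => ENNReal.ofReal (g (T + δ n) - 1)) atTop :=
          liminf_le_liminf (Eventually.of_forall fun n => by
            have hint : IntegrableOn (h n) (Ioc 0 T) volume := ((hhcont n).intervalIntegrable 0 T).1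
            have hpos : 0 ≤ᵐ[volume.restrict (Ioc 0 T)] h n := Eventually.of_forall fun x => hh0 n x
            rw [← ofReal_integral_eq_lintegral_ofReal hint hpos]
            apply ENNReal.ofReal_le_ofReal
            rw [← intervalIntegral.integral_of_le hT]
            exact hstep4 n)
      _ = ENNReal.ofReal (g T - 1) := by
          have h1 : Tendsto (fun n : ℕ => T + δ n) atTop (𝓝 T) := by
            have := (tendsto_const_nhds (x := T) (f := atTop (α := ℕ))).add
              tendsto_one_div_add_atTop_nhds_zero_nat
            simp only [hδdef]
            simpa [one_div] using this
          have h2 : Tendsto (fun n : ℕ => g (T + δ n) - 1) atTop (𝓝 (g T - 1)) :=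
            ((hgcont.tendsto T).comp h1).sub tendsto_const_nhds
          have h3 := ((ENNReal.continuous_ofReal.tendsto _).comp h2).liminf_eq
          simp only [Function.comp_def] at h3
          exact h3
  have hFint : IntegrableOn (fun x => β x * g x) (Ioc 0 T) volume :=
    ((hβ 0 T).mul_continuousOn hgcont.continuousOn).1
  have hFpos : 0 ≤ᵐ[volume.restrict (Ioc 0 T)] fun x => β x * g x :=
    Eventually.of_forall fun x => mul_nonneg (hβ0 x) (hgpos x).le
  have h1le : (1:ℝ) ≤ g T := hg0 ▸ hgmono hT
  show ∫ s in (0:ℝ)..T, β s * g s ≤ g T - 1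
  rw [intervalIntegral.integral_of_le hT]
  have heq := ofReal_integral_eq_lintegral_ofReal hFint hFpos
  have hTR : ENNReal.ofReal (∫ x in Ioc 0 T, β x * g x) ≤ ENNReal.ofReal (g T - 1) := by
    rw [heq]; exact hchain
  exact (ENNReal.ofReal_le_ofReal_iff (by linarith)).1 hTR

set_option maxHeartbeats 1000000

/-- Main exponential stability theorem for the linear delayed abstract problem. -/
theorem stmt_9 {H : Type*} [NormedAddCommGroup H] [NormedSpace ℝ H] [CompleteSpace H]
    (M ω τb K γ ω' : ℝ) (hM : 1 ≤ M) (hω : 0 < ω) (hτb : 0 < τb) (hK : 0 < K)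
    (hγ : 0 ≤ γ) (hω'0 : 0 ≤ ω') (hω' : ω' < ω)
    (S : ℝ → H →L[ℝ] H) (hS : ∀ t ≥ (0:ℝ), ‖S t‖ ≤ M * Real.exp (-ω * t))
    (B : H →L[ℝ] H)
    (k : ℝ → ℝ) (hk : ∀ a b : ℝ, IntervalIntegrable k volume a b)
    (hkK : ∀ t ≥ (0:ℝ), ∫ s in (t - τb)..t, |k s| ≤ K)
    (hlin : ∀ t ≥ (0:ℝ),
      M * ‖B‖ * Real.exp (ω * τb) * ∫ s in (0:ℝ)..t, |k s| ≤ γ + ω' * t)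
    (τ : ℝ → ℝ) (hτ : Continuous τ) (hτrange : ∀ t ≥ (0:ℝ), τ t ∈ Icc (0:ℝ) τb)
    (f : ℝ → H) (hf : ContinuousOn f (Icc (-τb) (0:ℝ)))
    (U : ℝ → H) (hU : ContinuousOn U (Ici (-τb)))
    (hhist : ∀ s ∈ Icc (-τb) (0:ℝ), U s = f s)
    (hduh : ∀ t ≥ (0:ℝ),
      U t = S t (f 0) + ∫ s in (0:ℝ)..t, k s • (S (t - s)) (B (U (s - τ s)))) :
    ∀ t ≥ (0:ℝ),
      ‖U t‖ ≤ M * Real.exp γ *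
        (‖f 0‖ + Real.exp (ω * τb) * K * ‖B‖ *
          ⨆ s ∈ Icc (-τb) (0:ℝ), Real.exp (ω * s) * ‖f s‖) *
        Real.exp (-(ω - ω') * t) := by
  have hτb0 : -τb ≤ 0 := by linarith
  have hM0 : 0 < M := lt_of_lt_of_le one_pos hM
  set Φ : ℝ := ⨆ s ∈ Icc (-τb) (0:ℝ), Real.exp (ω * s) * ‖f s‖ with hΦdef
  have hecont : ContinuousOn (fun s => Real.exp (ω * s) * ‖f s‖) (Icc (-τb) 0) :=
    ((Real.continuous_exp.comp (continuous_const.mul continuous_id)).continuousOn).mul hf.norm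
  have hbdd : BddAbove ((fun s => Real.exp (ω * s) * ‖f s‖) '' Icc (-τb) 0) :=
    (isCompact_Icc.image_of_continuousOn hecont).bddAbove
  have hΦub : ∀ s ∈ Icc (-τb) (0:ℝ), Real.exp (ω * s) * ‖f s‖ ≤ Φ := by
    intro s hs
    rw [hΦdef]
    set Q : ℝ := sSup ((fun s => Real.exp (ω * s) * ‖f s‖) '' Icc (-τb) 0) with hQdef
    have hrange : BddAbove (range fun x : ℝ =>
        ⨆ (_ : x ∈ Icc (-τb) (0:ℝ)), Real.exp (ω * x) * ‖f x‖) := by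
      refine ⟨max Q 0, ?_⟩
      rintro y ⟨x, rfl⟩
      show (⨆ (_ : x ∈ Icc (-τb) (0:ℝ)), Real.exp (ω * x) * ‖f x‖) ≤ max Q 0
      by_cases hx : x ∈ Icc (-τb) (0:ℝ)
      · rw [ciSup_pos hx]
        exact le_trans (le_csSup hbdd (mem_image_of_mem _ hx)) (le_max_left _ _)
      · haveI : IsEmpty (x ∈ Icc (-τb) (0:ℝ)) := ⟨hx⟩
        rw [iSup_of_empty', Real.sSup_empty]
        exact le_max_right _ _
    refine le_trans ?_ (le_ciSup hrange s)
    rw [ciSup_pos hs]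
  have hΦ0 : 0 ≤ Φ :=
    le_trans (by positivity) (hΦub 0 ⟨hτb0, le_refl 0⟩)
  clear_value Φ
  set c : ℝ := M * ‖B‖ * Real.exp (ω * τb) with hcdef
  have hc0 : 0 ≤ c := by positivity
  set β : ℝ → ℝ := fun s => c * |k s| with hβdef
  have hβint : ∀ a b : ℝ, IntervalIntegrable β volume a b := fun a b =>
    ((hk a b).abs).const_mul c
  have hβ0 : ∀ s, 0 ≤ β s := fun s => mul_nonneg hc0 (abs_nonneg _)
  have hβabs : ∀ a' b' : ℝ, (∫ u in a'..b', β u) = c * ∫ u in a'..b', |k u| := fun a' b' => by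
    simp only [hβdef]
    exact intervalIntegral.integral_const_mul c _
  clear_value β
  set Λ : ℝ → ℝ := fun t => ∫ u in (0:ℝ)..t, β u with hΛdef
  have hΛeq : ∀ t, Λ t = c * ∫ u in (0:ℝ)..t, |k u| := fun t => by
    rw [hΛdef]; exact hβabs 0 t
  have hΛcont : Continuous Λ := intervalIntegral.continuous_primitive hβint 0
  have hΛadd : ∀ x y : ℝ, Λ y - Λ x = ∫ u in x..y, β u := by
    intro x y
    have := intervalIntegral.integral_add_adjacent_intervals (hβint 0 x) (hβint x y)
    simp only [hΛdef]; linarith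
  have hΛmono : Monotone Λ := by
    intro x y hxy
    have h1 := hΛadd x y
    have h2 : 0 ≤ ∫ u in x..y, β u :=
      intervalIntegral.integral_nonneg hxy (fun u _ => hβ0 u)
    linarith
  have hΛ00 : Λ 0 = 0 := by simp [hΛdef]
  have hgronΛ : ∀ T : ℝ, 0 ≤ T →
      ∫ s in (0:ℝ)..T, β s * Real.exp (Λ s) ≤ Real.exp (Λ T) - 1 := by
    intro T hT
    have := gronwall_exp_integral β hβint hβ0 T hT
    simpa [← hΛdef] using this
  clear_value Λ
  set v : ℝ → ℝ := fun t => Real.exp (ω * t) * ‖U t‖ with hvdef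
  have hvcont : ContinuousOn v (Ici (-τb)) :=
    ((Real.continuous_exp.comp (continuous_const.mul continuous_id)).continuousOn).mul hU.norm
  have hv0 : ∀ t, 0 ≤ v t := fun t => mul_nonneg (Real.exp_pos _).le (norm_nonneg _)
  have hveq : ∀ t, v t = Real.exp (ω * t) * ‖U t‖ := fun t => by rw [hvdef]
  clear_value v
  set a : ℝ := M * ‖f 0‖ + c * K * Φ with hadef
  have ha0 : 0 ≤ a := by
    rw [hadef]; positivity
  clear_value a
  have hU0 : U 0 = f 0 := hhist 0 ⟨hτb0, le_refl 0⟩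
  -- main Gronwall claim
  have main : ∀ t ≥ (0:ℝ), v t ≤ a * Real.exp (Λ t) := by
    intro t0 ht0
    have key : ∀ ε > (0:ℝ), v t0 ≤ (a + ε) * Real.exp (Λ t0) := by
      intro ε hε
      by_contra hcon
      push_neg at hcon
      set ψ : ℝ → ℝ := fun t => (a + ε) * Real.exp (Λ t) with hψdef
      replace hcon : ψ t0 < v t0 := hcon
      have haε : 0 < a + ε := by linarith
      have hψcont : Continuous ψ := continuous_const.mul (Real.continuous_exp.comp hΛcont)
      have hψmono : Monotone ψ := fun x y hxy =>
        mul_le_mul_of_nonneg_left (Real.exp_le_exp.2 (hΛmono hxy)) haε.le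
      have hψpos : ∀ t, 0 < ψ t := fun t => mul_pos haε (Real.exp_pos _)
      have hψeq : ∀ t, ψ t = (a + ε) * Real.exp (Λ t) := fun t => by rw [hψdef]
      clear_value ψ
      set E : Set ℝ := Icc 0 t0 ∩ (fun x => v x - ψ x) ⁻¹' (Ici 0) with hEdef
      have hEmem : ∀ x, x ∈ E ↔ (x ∈ Icc 0 t0 ∧ ψ x ≤ v x) := by
        intro x
        simp [hEdef, sub_nonneg]
      have hEne : E.Nonempty := ⟨t0, (hEmem t0).2 ⟨⟨ht0, le_refl _⟩, hcon.le⟩⟩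
      have hEbdd : BddBelow E := ⟨0, fun x hx => ((hEmem x).1 hx).1.1⟩
      have hEclosed : IsClosed E := by
        apply ContinuousOn.preimage_isClosed_of_isClosed _ isClosed_Icc isClosed_Ici
        apply ContinuousOn.sub
        · exact hvcont.mono (fun x hx => le_trans hτb0 hx.1)
        · exact hψcont.continuousOn
      clear_value E
      set T : ℝ := sInf E with hTdef
      clear_value T
      have hTE : T ∈ E := by rw [hTdef]; exact hEclosed.csInf_mem hEne hEbdd
      obtain ⟨⟨hT0, hTt0⟩, hψT⟩ := (hEmem T).1 hTE
      have hTlb : ∀ x, 0 ≤ x → x < T → v x < ψ x := by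
        intro x hx0 hxT
        by_contra hxc
        push_neg at hxc
        have hxE : x ∈ E := (hEmem x).2 ⟨⟨hx0, le_trans hxT.le hTt0⟩, hxc⟩
        have := csInf_le hEbdd hxE
        rw [← hTdef] at this
        exact absurd this (not_le.2 hxT)
      -- continuity facts on [0, T]
      have hrmap : ∀ s ∈ Icc (0:ℝ) T, s - τ s ∈ Ici (-τb) := by
        intro s hs
        have := hτrange s hs.1
        simp only [Set.mem_Ici]
        have h0 := hs.1
        have h1 := this.1
        have h2 := this.2
        linarith
      have hUcomp : ContinuousOn (fun s => ‖U (s - τ s)‖) (Icc 0 T) :=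
        (hU.comp (continuous_id.sub hτ).continuousOn hrmap).norm
      have hcontP : ContinuousOn (fun s => M * Real.exp (ω * s) * (‖B‖ * ‖U (s - τ s)‖))
          (Icc 0 T) := by
        apply ContinuousOn.mul
        · exact (continuous_const.mul
            (Real.continuous_exp.comp (continuous_const.mul continuous_id))).continuousOn
        · exact continuous_const.continuousOn.mul hUcomp
      set Hf : ℝ → ℝ := fun s => |k s| * (M * Real.exp (ω * s) * (‖B‖ * ‖U (s - τ s)‖))
        with hHdef
      have hHeq : ∀ s, Hf s = |k s| * (M * Real.exp (ω * s) * (‖B‖ * ‖U (s - τ s)‖)) :=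
        fun s => by rw [hHdef]
      clear_value Hf
      have hHint : ∀ a' b' : ℝ, 0 ≤ a' → b' ≤ T → a' ≤ b' →
          IntervalIntegrable Hf volume a' b' := by
        intro a' b' h1 h2 h3
        rw [hHdef]
        apply ((hk a' b').abs).mul_continuousOn
        rw [uIcc_of_le h3]
        exact hcontP.mono (Icc_subset_Icc h1 h2)
      have hβψint : ∀ a' b' : ℝ, IntervalIntegrable (fun s => β s * ψ s) volume a' b' :=
        fun a' b' => (hβint a' b').mul_continuousOn hψcont.continuousOn
      -- Duhamel estimate at T
      have hUT : ‖U T‖ ≤ M * Real.exp (-ω * T) * ‖f 0‖ + ∫ s in (0:ℝ)..T, Real.exp (-(ω * T)) * Hf s := by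
        rw [hduh T hT0]
        have hb1 : ‖S T (f 0)‖ ≤ M * Real.exp (-ω * T) * ‖f 0‖ := by
          calc ‖S T (f 0)‖ ≤ ‖S T‖ * ‖f 0‖ := (S T).le_opNorm (f 0)
            _ ≤ M * Real.exp (-ω * T) * ‖f 0‖ :=
                mul_le_mul_of_nonneg_right (hS T hT0) (norm_nonneg _)
        have hb2 : ‖∫ s in (0:ℝ)..T, k s • (S (T - s)) (B (U (s - τ s)))‖ ≤
            ∫ s in (0:ℝ)..T, Real.exp (-(ω * T)) * Hf s := by
          have hGint : IntervalIntegrable (fun s => Real.exp (-(ω * T)) * Hf s) volume 0 T :=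
            (hHint 0 T (le_refl _) (le_refl _) hT0).const_mul _
          have hae : ∀ᵐ s ∂volume.restrict (Set.uIoc (0:ℝ) T),
              ‖k s • (S (T - s)) (B (U (s - τ s)))‖ ≤ Real.exp (-(ω * T)) * Hf s := by
            filter_upwards [ae_restrict_mem measurableSet_uIoc] with s hs
            rw [uIoc_of_le hT0] at hs
            have hs0 : 0 ≤ s := hs.1.le
            have hsT : s ≤ T := hs.2
            have hTs : (0:ℝ) ≤ T - s := by linarith
            rw [norm_smul, Real.norm_eq_abs]
            have c1 : ‖(S (T - s)) (B (U (s - τ s)))‖ ≤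
                (M * Real.exp (-ω * (T - s))) * (‖B‖ * ‖U (s - τ s)‖) := by
              calc ‖(S (T - s)) (B (U (s - τ s)))‖
                  ≤ ‖S (T - s)‖ * ‖B (U (s - τ s))‖ := (S (T - s)).le_opNorm _
                _ ≤ (M * Real.exp (-ω * (T - s))) * (‖B‖ * ‖U (s - τ s)‖) := by
                    apply mul_le_mul (hS (T - s) hTs) (B.le_opNorm _) (norm_nonneg _)
                    positivity
            have c2 : Real.exp (-ω * (T - s)) = Real.exp (-(ω * T)) * Real.exp (ω * s) := by
              rw [← Real.exp_add]; congr 1; ring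
            calc |k s| * ‖(S (T - s)) (B (U (s - τ s)))‖
                ≤ |k s| * ((M * Real.exp (-ω * (T - s))) * (‖B‖ * ‖U (s - τ s)‖)) :=
                  mul_le_mul_of_nonneg_left c1 (abs_nonneg _)
              _ = Real.exp (-(ω * T)) * Hf s := by rw [c2, hHeq]; ring
          calc ‖∫ s in (0:ℝ)..T, k s • (S (T - s)) (B (U (s - τ s)))‖
              ≤ |∫ s in (0:ℝ)..T, Real.exp (-(ω * T)) * Hf s| :=
                le_trans (intervalIntegral.norm_integral_le_of_norm_le hT0
                  (by rw [← uIoc_of_le hT0]; exact (ae_restrict_iff' measurableSet_uIoc).1 hae)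
                  hGint) (le_abs_self _)
            _ = ∫ s in (0:ℝ)..T, Real.exp (-(ω * T)) * Hf s := by
                apply abs_of_nonneg
                apply intervalIntegral.integral_nonneg hT0
                intro u hu
                have : 0 ≤ Hf u := by
                  rw [hHeq]
                  positivity
                positivity
        calc ‖S T (f 0) + ∫ s in (0:ℝ)..T, k s • (S (T - s)) (B (U (s - τ s)))‖
            ≤ ‖S T (f 0)‖ + ‖∫ s in (0:ℝ)..T, k s • (S (T - s)) (B (U (s - τ s)))‖ :=
              norm_add_le _ _
          _ ≤ _ := add_le_add hb1 hb2
      have hvT : v T ≤ M * ‖f 0‖ + ∫ s in (0:ℝ)..T, Hf s := by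
        have h1 : v T = Real.exp (ω * T) * ‖U T‖ := hveq T
        have h2 : Real.exp (ω * T) * Real.exp (-(ω * T)) = 1 := by
          rw [← Real.exp_add]; simp
        calc v T ≤ Real.exp (ω * T) *
              (M * Real.exp (-ω * T) * ‖f 0‖ + ∫ s in (0:ℝ)..T, Real.exp (-(ω * T)) * Hf s) := by
              rw [h1]
              exact mul_le_mul_of_nonneg_left hUT (Real.exp_pos _).le
          _ = M * ‖f 0‖ + ∫ s in (0:ℝ)..T, Hf s := by
              rw [intervalIntegral.integral_const_mul, mul_add]
              congr 1
              · have h3 : Real.exp (ω * T) * Real.exp (-ω * T) = 1 := by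
                  rw [← Real.exp_add]; simp
                calc Real.exp (ω * T) * (M * Real.exp (-ω * T) * ‖f 0‖)
                    = (Real.exp (ω * T) * Real.exp (-ω * T)) * (M * ‖f 0‖) := by ring
                  _ = M * ‖f 0‖ := by rw [h3, one_mul]
              · calc Real.exp (ω * T) * (Real.exp (-(ω * T)) * ∫ s in (0:ℝ)..T, Hf s)
                    = (Real.exp (ω * T) * Real.exp (-(ω * T))) * ∫ s in (0:ℝ)..T, Hf s := by ring
                  _ = ∫ s in (0:ℝ)..T, Hf s := by rw [h2, one_mul]
      -- split point
      set m : ℝ := min T τb with hmdef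
      have hm0 : 0 ≤ m := le_min hT0 hτb.le
      have hmT : m ≤ T := min_le_left _ _
      have hmτb : m ≤ τb := min_le_right _ _
      have haeT : ∀ᵐ s : ℝ ∂volume, s ≠ T := by
        have h0 : (volume : Measure ℝ) {T} = 0 := measure_singleton T
        rw [ae_iff]
        convert h0 using 2
        ext x
        simp
      have haeτb : ∀ᵐ s : ℝ ∂volume, s ≠ τb := by
        have h0 : (volume : Measure ℝ) {τb} = 0 := measure_singleton τb
        rw [ae_iff]
        convert h0 using 2
        ext x
        simp
      -- pointwise bounds
      have hcase2 : ∀ s, 0 ≤ s → s ≤ T → s ≠ T → 0 < s - τ s →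
          Hf s ≤ β s * ψ s := by
        intro s hs0 hsT hsne hr
        set r : ℝ := s - τ s with hrdef
        have hτs := hτrange s hs0
        have hrs : r ≤ s := by
          have := hτs.1; simp only [hrdef]; linarith
        have hrT : r < T := lt_of_le_of_lt hrs (lt_of_le_of_ne hsT hsne)
        have hvr : v r < ψ r := hTlb r hr.le hrT
        have hψrs : ψ r ≤ ψ s := hψmono hrs
        have hexp : Real.exp (ω * s) = Real.exp (ω * τ s) * Real.exp (ω * r) := by
          rw [← Real.exp_add]; congr 1; simp only [hrdef]; ring
        have hexpτ : Real.exp (ω * τ s) ≤ Real.exp (ω * τb) :=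
          Real.exp_le_exp.2 (by nlinarith [hτs.2])
        have hkey2 : Real.exp (ω * s) * ‖U r‖ ≤ Real.exp (ω * τb) * ψ s := by
          calc Real.exp (ω * s) * ‖U r‖
              = Real.exp (ω * τ s) * (Real.exp (ω * r) * ‖U r‖) := by rw [hexp]; ring
            _ = Real.exp (ω * τ s) * v r := by rw [hveq r]
            _ ≤ Real.exp (ω * τb) * ψ s := by
                apply mul_le_mul hexpτ (le_trans hvr.le hψrs) (hv0 r) (Real.exp_pos _).le
        calc Hf s = (|k s| * M * ‖B‖) * (Real.exp (ω * s) * ‖U r‖) := by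
              rw [hHeq]; simp only [hrdef]; ring
          _ ≤ (|k s| * M * ‖B‖) * (Real.exp (ω * τb) * ψ s) := by
              apply mul_le_mul_of_nonneg_left hkey2
              positivity
          _ = β s * ψ s := by rw [hβdef, hcdef]; ring
      have hcase1 : ∀ s, 0 ≤ s → s ≤ T → s ≠ T → s - τ s ≤ 0 →
          Hf s ≤ β s * Φ := by
        intro s hs0 hsT hsne hr
        set r : ℝ := s - τ s with hrdef
        have hτs := hτrange s hs0
        have hrmem : r ∈ Icc (-τb) (0:ℝ) := by
          constructor
          · simp only [hrdef]; have := hτs.2; linarith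
          · exact hr
        have hUr : U r = f r := hhist r hrmem
        have hΦr : Real.exp (ω * r) * ‖f r‖ ≤ Φ := hΦub r hrmem
        have hexp : Real.exp (ω * s) = Real.exp (ω * τ s) * Real.exp (ω * r) := by
          rw [← Real.exp_add]; congr 1; simp only [hrdef]; ring
        have hexpτ : Real.exp (ω * τ s) ≤ Real.exp (ω * τb) :=
          Real.exp_le_exp.2 (by nlinarith [hτs.2])
        have hkey2 : Real.exp (ω * s) * ‖U r‖ ≤ Real.exp (ω * τb) * Φ := by
          calc Real.exp (ω * s) * ‖U r‖
              = Real.exp (ω * τ s) * (Real.exp (ω * r) * ‖f r‖) := by rw [hexp, hUr]; ring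
            _ ≤ Real.exp (ω * τb) * Φ := by
                apply mul_le_mul hexpτ hΦr (by positivity) (Real.exp_pos _).le
        calc Hf s = (|k s| * M * ‖B‖) * (Real.exp (ω * s) * ‖U r‖) := by
              rw [hHeq]; simp only [hrdef]; ring
          _ ≤ (|k s| * M * ‖B‖) * (Real.exp (ω * τb) * Φ) := by
              apply mul_le_mul_of_nonneg_left hkey2
              positivity
          _ = β s * Φ := by rw [hβdef, hcdef]; ring
      -- integral bound on [0, m]
      have hIA : ∫ s in (0:ℝ)..m, Hf s ≤ ∫ s in (0:ℝ)..m, (β s * Φ + β s * ψ s) := by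
        apply intervalIntegral.integral_mono_ae_restrict hm0 (hHint 0 m (le_refl _) hmT hm0)
        · exact ((hβint 0 m).mul_const Φ).add (hβψint 0 m)
        · filter_upwards [ae_restrict_mem measurableSet_Icc, ae_restrict_of_ae haeT]
            with s hs hsne
          rcases le_or_gt (s - τ s) 0 with hr | hr
          · have := hcase1 s hs.1 (le_trans hs.2 hmT) hsne hr
            have hb : 0 ≤ β s * ψ s := mul_nonneg (hβ0 s) (hψpos s).le
            linarith
          · have := hcase2 s hs.1 (le_trans hs.2 hmT) hsne hr
            have hb : 0 ≤ β s * Φ := mul_nonneg (hβ0 s) hΦ0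
            linarith
      have hIA2 : ∫ s in (0:ℝ)..m, (β s * Φ + β s * ψ s)
          = (∫ s in (0:ℝ)..m, β s) * Φ + ∫ s in (0:ℝ)..m, β s * ψ s := by
        rw [intervalIntegral.integral_add ((hβint 0 m).mul_const Φ) (hβψint 0 m),
          intervalIntegral.integral_mul_const]
      have hkint : ∫ s in (0:ℝ)..m, β s ≤ c * K := by
        rw [hβabs 0 m]
        apply mul_le_mul_of_nonneg_left _ hc0
        have h1 : ∫ s in (0:ℝ)..τb, |k s| ≤ K := by
          have := hkK τb hτb.le
          rwa [sub_self] at this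
        have h2 : (∫ s in (0:ℝ)..m, |k s|) + ∫ s in m..τb, |k s| = ∫ s in (0:ℝ)..τb, |k s| :=
          intervalIntegral.integral_add_adjacent_intervals ((hk 0 m).abs) ((hk m τb).abs)
        have h3 : 0 ≤ ∫ s in m..τb, |k s| :=
          intervalIntegral.integral_nonneg hmτb (fun u _ => abs_nonneg _)
        linarith
      -- integral bound on [m, T]
      have hIB : ∫ s in m..T, Hf s ≤ ∫ s in m..T, β s * ψ s := by
        apply intervalIntegral.integral_mono_ae_restrict hmT (hHint m T hm0 (le_refl _) hmT)
          (hβψint m T)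
        filter_upwards [ae_restrict_mem measurableSet_Icc, ae_restrict_of_ae haeT,
          ae_restrict_of_ae haeτb] with s hs hsne hsneτb
        have hs0 : 0 ≤ s := le_trans hm0 hs.1
        rcases le_or_gt (s - τ s) 0 with hr | hr
        · exfalso
          have hsτ : s ≤ τ s := by linarith
          have hsτb : s < τb := lt_of_le_of_ne (le_trans hsτ (hτrange s hs0).2) hsneτb
          rcases le_total T τb with hcase | hcase
          · have : m = T := min_eq_left hcase
            rw [this] at hs
            exact hsne (le_antisymm hs.2 hs.1)
          · have : m = τb := min_eq_right hcase
            rw [this] at hs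
            linarith [hs.1]
        · exact hcase2 s hs0 hs.2 hsne hr
      -- Gronwall integral estimate
      have hgron : ∫ s in (0:ℝ)..T, β s * ψ s ≤ (a + ε) * (Real.exp (Λ T) - 1) := by
        have h1 : ∀ s, β s * ψ s = (a + ε) * (β s * Real.exp (Λ s)) := by
          intro s; rw [hψeq]; ring
        rw [intervalIntegral.integral_congr (g := fun s => (a + ε) * (β s * Real.exp (Λ s)))
          (fun s _ => h1 s), intervalIntegral.integral_const_mul]
        apply mul_le_mul_of_nonneg_left _ haε.le
        exact hgronΛ T hT0
      have hsplitH : (∫ s in (0:ℝ)..m, Hf s) + ∫ s in m..T, Hf s = ∫ s in (0:ℝ)..T, Hf s :=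
        intervalIntegral.integral_add_adjacent_intervals (hHint 0 m (le_refl _) hmT hm0)
          (hHint m T hm0 (le_refl _) hmT)
      have hsplitβψ : (∫ s in (0:ℝ)..m, β s * ψ s) + ∫ s in m..T, β s * ψ s
          = ∫ s in (0:ℝ)..T, β s * ψ s :=
        intervalIntegral.integral_add_adjacent_intervals (hβψint 0 m) (hβψint m T)
      -- contradiction
      have hfinal : v T ≤ ψ T - ε := by
        have hΦK : (∫ s in (0:ℝ)..m, β s) * Φ ≤ c * K * Φ :=
          mul_le_mul_of_nonneg_right hkint hΦ0
        have hψTeq : ψ T = (a + ε) * Real.exp (Λ T) := hψeq T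
        have : v T ≤ M * ‖f 0‖ + (c * K * Φ + (a + ε) * (Real.exp (Λ T) - 1)) := by
          have := hvT
          nlinarith [hIA, hIA2, hIB, hgron, hsplitH, hsplitβψ, hΦK]
        rw [hψTeq]
        simp only [hadef] at this ⊢
        nlinarith
      have := hψpos T
      linarith [hv0 T, hfinal, hψT]
    -- pass to the limit in ε
    by_contra hlt
    push_neg at hlt
    set e : ℝ := Real.exp (Λ t0) with hedef
    have he : 0 < e := Real.exp_pos _
    have hε : 0 < (v t0 - a * e) / (2 * e) := by
      apply div_pos (by linarith) (by linarith)
    have hk2 := key _ hε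
    have : (a + (v t0 - a * e) / (2 * e)) * e = a * e + (v t0 - a * e) / 2 := by
      field_simp
    rw [this] at hk2
    linarith
  -- conclusion
  intro t ht
  have hvt := main t ht
  have hΛb : Λ t ≤ γ + ω' * t := by
    rw [hΛeq]
    exact hlin t ht
  have h1 : ‖U t‖ = Real.exp (-(ω * t)) * v t := by
    rw [hveq, ← mul_assoc, ← Real.exp_add]
    simp
  rw [h1]
  calc Real.exp (-(ω * t)) * v t ≤ Real.exp (-(ω * t)) * (a * Real.exp (γ + ω' * t)) := by
        apply mul_le_mul_of_nonneg_left _ (Real.exp_pos _).le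
        calc v t ≤ a * Real.exp (Λ t) := hvt
          _ ≤ a * Real.exp (γ + ω' * t) :=
            mul_le_mul_of_nonneg_left (Real.exp_le_exp.2 hΛb) ha0
    _ = a * Real.exp γ * Real.exp (-(ω - ω') * t) := by
        have he : Real.exp (-(ω * t)) * Real.exp (γ + ω' * t)
            = Real.exp γ * Real.exp (-(ω - ω') * t) := by
          rw [← Real.exp_add, ← Real.exp_add]
          congr 1; ring
        linear_combination a * he
    _ = M * Real.exp γ * (‖f 0‖ + Real.exp (ω * τb) * K * ‖B‖ * Φ) * Real.exp (-(ω - ω') * t) := by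
        rw [hadef, hcdef]
        ring
end

section
/- Let $H$ be a Banach space and let $U : [-\bar\tau, \infty) \to H$ be a continuous solution of $U(t) = S(t)U_0 + \int_0^t S(t-s)[G(U(s)) + k(s) B U(s-\tau(s))] ds$ for $t \ge 0$ with $U = f$ on $[-\bar\tau, 0]$, where $\|S(t)\| \le M e^{-\omega t}$, $B$ bounded, $G$ is $L$-Lipschitz with $G(0)=0$ and $L < (\omega - \omega')/M$, $\tau(t) \in [0,\bar\tau]$, $\int_{t-\bar\tau}^t |k| \le K$ for all $t \ge 0$, and $M\|B\| e^{\omega\bar\tau} \int_0^t |k(s)| ds \le \gamma + \omega' t$ with $0 \le \omega' < \omega$, $\gamma \ge 0$. Then $\|U(t)\| \le M e^{\gamma} \left( \|U_0\| + e^{\omega\bar\tau} K \|B\| \max_{s\in[-\bar\tau,0]} \{e^{\omega s}\|f(s)\|\} \right) e^{-(\omega - \omega' - ML)t}$ for all $t \ge 0$. -/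
open Real Set MeasureTheory Filter

private lemma gronwall_aux (g m : ℝ → ℝ) (a t : ℝ) (ha : 0 ≤ a) (ht : 0 ≤ t)
    (hg0 : ∀ s, 0 ≤ g s) (hgint : ∀ u v : ℝ, IntervalIntegrable g volume u v)
    (hm : Monotone m) (hm0 : ∀ s, 0 ≤ m s)
    (hgm : ∀ u v : ℝ, IntervalIntegrable (fun s => g s * m s) volume u v)
    (hkey : ∀ r, 0 ≤ r → r ≤ t → m r ≤ a + ∫ s in (0:ℝ)..r, g s * m s) :
    m t ≤ a * Real.exp (∫ s in (0:ℝ)..t, g s) := by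
  set Gf : ℝ → ℝ := fun r => ∫ s in (0:ℝ)..r, g s with hGf
  have hGcont : Continuous Gf := intervalIntegral.continuous_primitive hgint 0
  have main : ∀ θ : ℝ, 0 < θ → θ < 1 → m t ≤ a * Real.exp (Gf t / (1 - θ)) := by
    intro θ hθ0 hθ1
    obtain ⟨δ, hδ0, hδ⟩ := Metric.uniformContinuousOn_iff.mp
      ((isCompact_Icc (a := (0:ℝ)) (b := t)).uniformContinuousOn_of_continuous
        hGcont.continuousOn) θ hθ0
    obtain ⟨n, hn⟩ := exists_nat_gt (t / δ)
    set N : ℕ := n + 1 with hN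
    have hNpos : 0 < (N : ℝ) := by positivity
    set p : ℕ → ℝ := fun i => (i : ℝ) * (t / N) with hp
    have hp0 : p 0 = 0 := by simp [hp]
    have hpN : p N = t := by simp only [hp]; field_simp
    have hpstep : ∀ i : ℕ, p (i + 1) - p i = t / N := by
      intro i; simp only [hp]; push_cast; ring
    have htN : 0 ≤ t / N := by positivity
    have hpmono : ∀ i : ℕ, p i ≤ p (i + 1) := by
      intro i; nlinarith [hpstep i]
    have hpmem : ∀ i : ℕ, i ≤ N → p i ∈ Icc (0:ℝ) t := by
      intro i hi
      constructor
      · simp only [hp]; positivity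
      · have : (i : ℝ) ≤ (N : ℝ) := by exact_mod_cast hi
        calc p i = (i : ℝ) * (t / N) := rfl
          _ ≤ (N : ℝ) * (t / N) := by nlinarith
          _ = t := by field_simp
    have hstepδ : t / N < δ := by
      rw [div_lt_iff₀ hNpos, mul_comm]
      have : t / δ < (N : ℝ) := by
        have : (n : ℝ) ≤ (N : ℝ) := by exact_mod_cast Nat.le_succ n
        linarith
      calc t = (t / δ) * δ := by field_simp
        _ < (N : ℝ) * δ := by nlinarith
    set D : ℕ → ℝ := fun i => Gf (p (i + 1)) - Gf (p i) with hD
    have hDeq : ∀ i : ℕ, D i = ∫ s in p i..p (i + 1), g s := by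
      intro i
      have := intervalIntegral.integral_add_adjacent_intervals
        (hgint 0 (p i)) (hgint (p i) (p (i + 1)))
      simp only [hD, hGf]
      linarith
    have hD0 : ∀ i : ℕ, 0 ≤ D i := by
      intro i
      rw [hDeq i]
      exact intervalIntegral.integral_nonneg (hpmono i) (fun x _ => hg0 x)
    have hDθ : ∀ i : ℕ, i < N → D i ≤ θ := by
      intro i hi
      have h1 := hδ (p (i + 1)) (hpmem (i + 1) hi) (p i) (hpmem i hi.le)
        (by rw [Real.dist_eq, hpstep i, abs_of_nonneg htN]; exact hstepδ)
      rw [Real.dist_eq] at h1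
      calc D i ≤ |Gf (p (i + 1)) - Gf (p i)| := le_abs_self _
        _ ≤ θ := h1.le
    have hchain : ∀ i : ℕ, i ≤ N →
        (∫ s in (0:ℝ)..p i, g s * m s) ≤ ∑ j ∈ Finset.range i, D j * m (p (j + 1)) := by
      intro i hi
      induction i with
      | zero => simp [hp0]
      | succ i ih =>
        have hiN : i ≤ N := Nat.le_of_succ_le hi
        have hsplit := intervalIntegral.integral_add_adjacent_intervals
          (hgm 0 (p i)) (hgm (p i) (p (i + 1)))
        have hpiece : (∫ s in p i..p (i + 1), g s * m s) ≤ D i * m (p (i + 1)) := by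
          have h1 : (∫ s in p i..p (i + 1), g s * m s)
              ≤ ∫ s in p i..p (i + 1), g s * m (p (i + 1)) := by
            apply intervalIntegral.integral_mono_on (hpmono i) (hgm _ _)
              ((hgint _ _).mul_const _)
            intro x hx
            exact mul_le_mul_of_nonneg_left (hm hx.2) (hg0 x)
          have h2 : (∫ s in p i..p (i + 1), g s * m (p (i + 1)))
              = (∫ s in p i..p (i + 1), g s) * m (p (i + 1)) :=
            intervalIntegral.integral_mul_const _ _
          rw [h2, ← hDeq i] at h1
          exact h1
        calc (∫ s in (0:ℝ)..p (i + 1), g s * m s)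
            = (∫ s in (0:ℝ)..p i, g s * m s) + ∫ s in p i..p (i + 1), g s * m s := hsplit.symm
          _ ≤ (∑ j ∈ Finset.range i, D j * m (p (j + 1))) + D i * m (p (i + 1)) :=
              add_le_add (ih hiN) hpiece
          _ = ∑ j ∈ Finset.range (i + 1), D j * m (p (j + 1)) := (Finset.sum_range_succ _ _).symm
    set Y : ℕ → ℝ := fun i => a + ∑ j ∈ Finset.range i, D j * m (p (j + 1)) with hY
    have hY0 : ∀ i, 0 ≤ Y i := by
      intro i
      have : 0 ≤ ∑ j ∈ Finset.range i, D j * m (p (j + 1)) :=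
        Finset.sum_nonneg fun j _ => mul_nonneg (hD0 j) (hm0 _)
      simp only [hY]; linarith
    have hmY : ∀ i, i ≤ N → m (p i) ≤ Y i := by
      intro i hi
      refine (hkey (p i) (hpmem i hi).1 (hpmem i hi).2).trans ?_
      exact add_le_add le_rfl (hchain i hi)
    have hθ1' : 0 < 1 - θ := by linarith
    have hstepY : ∀ i : ℕ, i < N → Y (i + 1) ≤ Y i * Real.exp (D i / (1 - θ)) := by
      intro i hi
      have h1 : Y (i + 1) = Y i + D i * m (p (i + 1)) := by
        simp only [hY, Finset.sum_range_succ]; ring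
      have h2 : m (p (i + 1)) ≤ Y (i + 1) := hmY (i + 1) hi
      have h3 : Y (i + 1) * (1 - D i) ≤ Y i := by nlinarith [hD0 i]
      have hexp : 1 + D i / (1 - θ) ≤ Real.exp (D i / (1 - θ)) := by
        have := Real.add_one_le_exp (D i / (1 - θ)); linarith
      have h4 : 1 ≤ (1 - D i) * (1 + D i / (1 - θ)) := by
        rw [← sub_nonneg]
        have : (1 - D i) * (1 + D i / (1 - θ)) - 1 = D i * (θ - D i) / (1 - θ) := by
          field_simp; ring
        rw [this]
        exact div_nonneg (mul_nonneg (hD0 i) (by linarith [hDθ i hi])) hθ1'.le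
      calc Y (i + 1) = Y (i + 1) * 1 := (mul_one _).symm
        _ ≤ Y (i + 1) * ((1 - D i) * (1 + D i / (1 - θ))) :=
            mul_le_mul_of_nonneg_left h4 (hY0 (i + 1))
        _ = (Y (i + 1) * (1 - D i)) * (1 + D i / (1 - θ)) := by ring
        _ ≤ Y i * (1 + D i / (1 - θ)) := by
            have hpos : 0 ≤ 1 + D i / (1 - θ) := by
              have := div_nonneg (hD0 i) hθ1'.le; linarith
            exact mul_le_mul_of_nonneg_right h3 hpos
        _ ≤ Y i * Real.exp (D i / (1 - θ)) := mul_le_mul_of_nonneg_left hexp (hY0 i)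
    have hYexp : ∀ i : ℕ, i ≤ N →
        Y i ≤ a * Real.exp (∑ j ∈ Finset.range i, D j / (1 - θ)) := by
      intro i hi
      induction i with
      | zero => simp [hY]
      | succ i ih =>
        have hiN : i ≤ N := Nat.le_of_succ_le hi
        calc Y (i + 1) ≤ Y i * Real.exp (D i / (1 - θ)) := hstepY i hi
          _ ≤ (a * Real.exp (∑ j ∈ Finset.range i, D j / (1 - θ)))
                * Real.exp (D i / (1 - θ)) :=
              mul_le_mul_of_nonneg_right (ih hiN) (Real.exp_nonneg _)
          _ = a * Real.exp (∑ j ∈ Finset.range (i + 1), D j / (1 - θ)) := by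
              rw [Finset.sum_range_succ, Real.exp_add]; ring
    have hsumD : ∑ j ∈ Finset.range N, D j = Gf t := by
      have := Finset.sum_range_sub (fun i => Gf (p i)) N
      simp only [hD]
      rw [this, hp0, hpN]
      simp [hGf]
    have hfin := (hmY N le_rfl).trans (hYexp N le_rfl)
    rw [hpN, ← Finset.sum_div, hsumD] at hfin
    exact hfin
  have hcont : Filter.Tendsto (fun θ : ℝ => a * Real.exp (Gf t / (1 - θ)))
      (nhdsWithin 0 (Ioi 0)) (nhds (a * Real.exp (Gf t / (1 - 0)))) := by
    apply Filter.Tendsto.mono_left _ nhdsWithin_le_nhds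
    apply ContinuousAt.tendsto
    have h1 : (1 : ℝ) - 0 ≠ 0 := by norm_num
    exact (continuousAt_const.mul (Real.continuous_exp.continuousAt.comp
      (continuousAt_const.div (continuous_const.sub continuous_id).continuousAt h1)))
  have hev : ∀ᶠ θ in nhdsWithin (0:ℝ) (Ioi 0),
      m t ≤ a * Real.exp (Gf t / (1 - θ)) := by
    filter_upwards [Ioo_mem_nhdsGT one_pos] with θ hθ
    exact main θ hθ.1 hθ.2
  have := ge_of_tendsto hcont hev
  simpa using this

set_option maxHeartbeats 1000000 in
/-- Exponential stability for the nonlinear delayed abstract problem. -/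
theorem stmt_11 {H : Type*} [NormedAddCommGroup H] [NormedSpace ℝ H] [CompleteSpace H]
    (M ω τb K γ ω' L : ℝ) (hM : 1 ≤ M) (hω : 0 < ω) (hτb : 0 < τb) (hK : 0 < K)
    (hγ : 0 ≤ γ) (hω'0 : 0 ≤ ω') (hω' : ω' < ω) (hL0 : 0 ≤ L) (hL : L < (ω - ω') / M)
    (S : ℝ → H →L[ℝ] H) (hS : ∀ t ≥ (0:ℝ), ‖S t‖ ≤ M * Real.exp (-ω * t))
    (B : H →L[ℝ] H)
    (G : H → H) (hG : ∀ x y : H, ‖G x - G y‖ ≤ L * ‖x - y‖) (hG0 : G 0 = 0)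
    (k : ℝ → ℝ) (hk : ∀ a b : ℝ, IntervalIntegrable k volume a b)
    (hkK : ∀ t ≥ (0:ℝ), ∫ s in (t - τb)..t, |k s| ≤ K)
    (hlin : ∀ t ≥ (0:ℝ),
      M * ‖B‖ * Real.exp (ω * τb) * ∫ s in (0:ℝ)..t, |k s| ≤ γ + ω' * t)
    (τ : ℝ → ℝ) (hτ : Continuous τ) (hτrange : ∀ t ≥ (0:ℝ), τ t ∈ Icc (0:ℝ) τb)
    (f : ℝ → H) (hf : ContinuousOn f (Icc (-τb) (0:ℝ)))
    (U : ℝ → H) (hU : ContinuousOn U (Ici (-τb)))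
    (hhist : ∀ s ∈ Icc (-τb) (0:ℝ), U s = f s)
    (hduh : ∀ t ≥ (0:ℝ),
      U t = S t (f 0) +
        ∫ s in (0:ℝ)..t, (S (t - s)) (G (U s) + k s • B (U (s - τ s)))) :
    ∀ t ≥ (0:ℝ),
      ‖U t‖ ≤ M * Real.exp γ *
        (‖f 0‖ + Real.exp (ω * τb) * K * ‖B‖ *
          ⨆ s ∈ Icc (-τb) (0:ℝ), Real.exp (ω * s) * ‖f s‖) *
        Real.exp (-(ω - ω' - M * L) * t) := by
  intro t ht
  set F : ℝ := ⨆ s ∈ Icc (-τb) (0:ℝ), Real.exp (ω * s) * ‖f s‖ with hFdef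
  have hMpos : (0:ℝ) < M := lt_of_lt_of_le one_pos hM
  have hτb0 : (0:ℝ) ≤ τb := hτb.le
  -- facts about F
  have hFbdd : BddAbove ((fun s => Real.exp (ω * s) * ‖f s‖) '' Icc (-τb) 0) :=
    (isCompact_Icc.image_of_continuousOn
      (((Real.continuous_exp.comp (continuous_const.mul continuous_id)).continuousOn).mul
        hf.norm)).bddAbove
  have hFf : ∀ s ∈ Icc (-τb) (0:ℝ), Real.exp (ω * s) * ‖f s‖ ≤ F := by
    intro s hs
    obtain ⟨b, hb⟩ := hFbdd
    have houter : BddAbove (Set.range fun x : ℝ =>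
        ⨆ _ : x ∈ Icc (-τb) (0:ℝ), Real.exp (ω * x) * ‖f x‖) := by
      refine ⟨max b 0, ?_⟩
      rintro y ⟨x, rfl⟩
      show (⨆ _ : x ∈ Icc (-τb) (0:ℝ), Real.exp (ω * x) * ‖f x‖) ≤ max b 0
      by_cases hx : x ∈ Icc (-τb) (0:ℝ)
      · rw [ciSup_pos hx]
        exact le_max_of_le_left (hb ⟨x, hx, rfl⟩)
      · haveI : IsEmpty (x ∈ Icc (-τb) (0:ℝ)) := ⟨hx⟩
        rw [Real.iSup_of_isEmpty]
        exact le_max_right _ _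
    have h1 : (⨆ _ : s ∈ Icc (-τb) (0:ℝ), Real.exp (ω * s) * ‖f s‖) ≤ F :=
      le_ciSup houter s
    rwa [ciSup_pos hs] at h1
  have h0mem : (0:ℝ) ∈ Icc (-τb) (0:ℝ) := ⟨by linarith, le_refl 0⟩
  have hF0 : 0 ≤ F := le_trans (by positivity) (hFf 0 h0mem)
  set c : ℝ := M * ‖B‖ * Real.exp (ω * τb) with hcdef
  have hc0 : 0 ≤ c := by positivity
  set φ : ℝ → ℝ := fun r => Real.exp (ω * r) * ‖U r‖ with hφdef
  have hφ0 : ∀ r, 0 ≤ φ r := fun r => by positivity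
  set m : ℝ → ℝ := fun r => sSup (φ '' Icc 0 r) with hmdef
  have hφcont : ContinuousOn φ (Ici (-τb)) :=
    ((Real.continuous_exp.comp (continuous_const.mul continuous_id)).continuousOn).mul hU.norm
  have hIccIci : ∀ r : ℝ, Icc (0:ℝ) r ⊆ Ici (-τb) := fun r x hx => le_trans (by linarith) hx.1
  have hbdd : ∀ r : ℝ, BddAbove (φ '' Icc 0 r) := fun r =>
    (isCompact_Icc.image_of_continuousOn (hφcont.mono (hIccIci r))).bddAbove
  have hφm : ∀ r s : ℝ, 0 ≤ r → r ≤ s → φ r ≤ m s := fun r s h0 hrs =>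
    le_csSup (hbdd s) ⟨r, ⟨h0, hrs⟩, rfl⟩
  have hm0 : ∀ r, 0 ≤ m r := by
    intro r
    rcases le_or_gt 0 r with h | h
    · exact le_trans (hφ0 0) (hφm 0 r le_rfl h)
    · simp [hmdef, Icc_eq_empty (not_le.mpr h), Real.sSup_empty]
  have hmmono : Monotone m := by
    intro u v huv
    rcases le_or_gt 0 u with h | h
    · exact csSup_le_csSup (hbdd v) ⟨φ 0, 0, ⟨le_rfl, h⟩, rfl⟩
        (image_mono (Icc_subset_Icc le_rfl huv))
    · have : m u = 0 := by simp [hmdef, Icc_eq_empty (not_le.mpr h), Real.sSup_empty]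
      rw [this]; exact hm0 v
  set g : ℝ → ℝ := fun s => M * L + c * |k s| with hgdef
  have hg0 : ∀ s, 0 ≤ g s := fun s => by positivity
  have hkabs : ∀ u v : ℝ, IntervalIntegrable (fun s => |k s|) volume u v := fun u v => (hk u v).abs
  have hgint : ∀ u v : ℝ, IntervalIntegrable g volume u v := fun u v =>
    (intervalIntegrable_const).add ((hkabs u v).const_mul c)
  have hgm : ∀ u v : ℝ, IntervalIntegrable (fun s => g s * m s) volume u v := by
    intro u v
    rw [intervalIntegrable_iff]
    have hgI : IntegrableOn g (uIoc u v) volume := intervalIntegrable_iff.mp (hgint u v)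
    have hmmeas : AEStronglyMeasurable m (volume.restrict (uIoc u v)) :=
      (hmmono.measurable).aestronglyMeasurable
    have hbound : ∀ᵐ x ∂(volume.restrict (uIoc u v)), ‖m x‖ ≤ m (max u v) := by
      filter_upwards [ae_restrict_mem measurableSet_uIoc] with x hx
      rw [Real.norm_eq_abs, abs_of_nonneg (hm0 x)]
      exact hmmono hx.2
    exact (Integrable.bdd_mul hgI hmmeas hbound).congr
      (Filter.Eventually.of_forall fun x => mul_comm (m x) (g x))
  -- key pointwise integral inequality
  have ha0 : 0 ≤ M * ‖f 0‖ + c * K * F := by positivity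
  have hφkey : ∀ r, 0 ≤ r →
      φ r ≤ (M * ‖f 0‖ + c * K * F) + ∫ s in (0:ℝ)..r, g s * m s := by
    intro r hr
    have hsub : Icc (0:ℝ) r ⊆ Ici (-τb) := hIccIci r
    have huIcc : uIcc (0:ℝ) r = Icc 0 r := uIcc_of_le hr
    have hdelmem : ∀ s ∈ Icc (0:ℝ) r, s - τ s ∈ Ici (-τb) := by
      intro s hs
      have h1 := hτrange s hs.1
      simp only [mem_Ici]
      linarith [h1.2, hs.1]
    have hUc : ContinuousOn (fun s => ‖U s‖) (Icc (0:ℝ) r) := (hU.mono hsub).norm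
    have hUdc : ContinuousOn (fun s => ‖U (s - τ s)‖) (Icc (0:ℝ) r) :=
      (hU.comp ((continuous_id.sub hτ).continuousOn) hdelmem).norm
    set D : ℝ → ℝ := fun s => M * Real.exp (-ω * (r - s)) * L * ‖U s‖
        + M * Real.exp (-ω * (r - s)) * ‖B‖ * ‖U (s - τ s)‖ * |k s| with hDdef
    have hecont : ContinuousOn (fun s : ℝ => Real.exp (-ω * (r - s))) (Icc (0:ℝ) r) :=
      (Real.continuous_exp.comp ((continuous_const).mul
        (continuous_const.sub continuous_id))).continuousOn
    have hDint : IntervalIntegrable D volume 0 r := by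
      apply IntervalIntegrable.add
      · apply ContinuousOn.intervalIntegrable
        rw [huIcc]
        exact (((continuousOn_const.mul hecont).mul continuousOn_const).mul hUc)
      · apply IntervalIntegrable.continuousOn_mul
        · exact (hkabs 0 r)
        · rw [huIcc]
          exact ((continuousOn_const.mul hecont).mul continuousOn_const).mul hUdc
    have hDint' : IntegrableOn D (Ioc 0 r) volume := by
      have := intervalIntegrable_iff.mp hDint
      rwa [uIoc_of_le hr] at this
    have hD0' : ∀ s, 0 ≤ D s := by
      intro s
      have h1 : 0 ≤ M * Real.exp (-ω * (r - s)) * L * ‖U s‖ :=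
        mul_nonneg (mul_nonneg (mul_nonneg hMpos.le (Real.exp_nonneg _)) hL0) (norm_nonneg _)
      have h2 : 0 ≤ M * Real.exp (-ω * (r - s)) * ‖B‖ * ‖U (s - τ s)‖ * |k s| :=
        mul_nonneg (mul_nonneg (mul_nonneg (mul_nonneg hMpos.le (Real.exp_nonneg _))
          (norm_nonneg _)) (norm_nonneg _)) (abs_nonneg _)
      simp only [hDdef]; linarith
    have step1 : ‖U r‖ ≤ M * Real.exp (-ω * r) * ‖f 0‖ + ∫ s in (0:ℝ)..r, D s := by
      rw [hduh r hr]
      refine (norm_add_le _ _).trans (add_le_add ?_ ?_)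
      · calc ‖S r (f 0)‖ ≤ ‖S r‖ * ‖f 0‖ := (S r).le_opNorm _
          _ ≤ M * Real.exp (-ω * r) * ‖f 0‖ :=
            mul_le_mul_of_nonneg_right (hS r hr) (norm_nonneg _)
      · refine (intervalIntegral.norm_integral_le_integral_norm hr).trans ?_
        rw [intervalIntegral.integral_of_le hr, intervalIntegral.integral_of_le hr]
        refine integral_mono_of_nonneg (Filter.Eventually.of_forall fun s => norm_nonneg _)
          hDint' ?_
        filter_upwards [ae_restrict_mem measurableSet_Ioc] with s hs
        have hrs : (0:ℝ) ≤ r - s := by linarith [hs.2]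
        have h2 : ‖G (U s) + k s • B (U (s - τ s))‖
            ≤ L * ‖U s‖ + |k s| * (‖B‖ * ‖U (s - τ s)‖) := by
          refine (norm_add_le _ _).trans (add_le_add ?_ ?_)
          · simpa [hG0] using hG (U s) 0
          · rw [norm_smul, Real.norm_eq_abs]
            exact mul_le_mul_of_nonneg_left (B.le_opNorm _) (abs_nonneg _)
        calc ‖S (r - s) (G (U s) + k s • B (U (s - τ s)))‖
            ≤ ‖S (r - s)‖ * ‖G (U s) + k s • B (U (s - τ s))‖ := (S (r - s)).le_opNorm _
          _ ≤ (M * Real.exp (-ω * (r - s))) * (L * ‖U s‖ + |k s| * (‖B‖ * ‖U (s - τ s)‖)) := by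
              apply mul_le_mul (hS (r - s) hrs) h2 (norm_nonneg _)
              positivity
          _ = D s := by simp only [hDdef]; ring
    -- multiply by exp (ω r)
    have step2 : φ r ≤ M * ‖f 0‖ + ∫ s in (0:ℝ)..r, Real.exp (ω * r) * D s := by
      have e1 : Real.exp (ω * r) * (M * Real.exp (-ω * r)) = M := by
        rw [mul_comm (Real.exp (ω * r)), mul_assoc, ← Real.exp_add]
        simp
      have := mul_le_mul_of_nonneg_left step1 (Real.exp_nonneg (ω * r))
      calc φ r = Real.exp (ω * r) * ‖U r‖ := rfl
        _ ≤ Real.exp (ω * r) * (M * Real.exp (-ω * r) * ‖f 0‖ + ∫ s in (0:ℝ)..r, D s) := this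
        _ = Real.exp (ω * r) * (M * Real.exp (-ω * r)) * ‖f 0‖
              + Real.exp (ω * r) * ∫ s in (0:ℝ)..r, D s := by ring
        _ = M * ‖f 0‖ + ∫ s in (0:ℝ)..r, Real.exp (ω * r) * D s := by
            rw [e1, intervalIntegral.integral_const_mul]
    -- the indicator-based dominating function
    set ind : ℝ → ℝ := Set.indicator (Icc (0:ℝ) τb) (fun u => |k u|) with hinddef
    have hind0 : ∀ s, 0 ≤ ind s := fun s =>
      Set.indicator_nonneg (fun u _ => abs_nonneg (k u)) s
    have hindint : IntervalIntegrable ind volume 0 r := by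
      rw [intervalIntegrable_iff]
      exact (intervalIntegrable_iff.mp (hkabs 0 r)).indicator measurableSet_Icc
    have step3 : (∫ s in (0:ℝ)..r, Real.exp (ω * r) * D s)
        ≤ ∫ s in (0:ℝ)..r, (g s * m s + (c * F) * ind s) := by
      rw [intervalIntegral.integral_of_le hr, intervalIntegral.integral_of_le hr]
      refine integral_mono_of_nonneg
        (Filter.Eventually.of_forall fun s => mul_nonneg (Real.exp_nonneg _) (hD0' s)) ?_ ?_
      · have : IntervalIntegrable (fun s => g s * m s + (c * F) * ind s) volume 0 r :=
          (hgm 0 r).add (hindint.const_mul (c * F))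
        have h2 := intervalIntegrable_iff.mp this
        rwa [uIoc_of_le hr] at h2
      · filter_upwards [ae_restrict_mem measurableSet_Ioc] with s hs
        have hs0 : (0:ℝ) ≤ s := hs.1.le
        have hexps : Real.exp (ω * r) * Real.exp (-ω * (r - s)) = Real.exp (ω * s) := by
          rw [← Real.exp_add]; ring_nf
        have hτs := hτrange s hs0
        have hA : Real.exp (ω * s) * ‖U s‖ ≤ m s := hφm s s hs0 le_rfl
        -- bound the delayed factor
        have hdel : Real.exp (ω * s) * ‖U (s - τ s)‖ * |k s|
            ≤ Real.exp (ω * τb) * (m s * |k s| + F * ind s) := by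
          have hexpsplit : Real.exp (ω * s)
              = Real.exp (ω * τ s) * Real.exp (ω * (s - τ s)) := by
            rw [← Real.exp_add]; ring_nf
          have hexpτ : Real.exp (ω * τ s) ≤ Real.exp (ω * τb) :=
            Real.exp_le_exp.mpr (mul_le_mul_of_nonneg_left hτs.2 hω.le)
          rcases le_or_gt 0 (s - τ s) with hy | hy
          · -- no memory: delayed state is within [0, s]
            have h5 : φ (s - τ s) ≤ m s := hφm (s - τ s) s hy (by linarith [hτs.1])
            have h6 : Real.exp (ω * s) * ‖U (s - τ s)‖ ≤ Real.exp (ω * τb) * m s := by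
              calc Real.exp (ω * s) * ‖U (s - τ s)‖
                  = Real.exp (ω * τ s) * φ (s - τ s) := by
                    simp only [hφdef]; rw [hexpsplit]; ring
                _ ≤ Real.exp (ω * τb) * m s :=
                    mul_le_mul hexpτ h5 (hφ0 _) (Real.exp_nonneg _)
            have h7 : 0 ≤ Real.exp (ω * τb) * (F * ind s) :=
              mul_nonneg (Real.exp_nonneg _) (mul_nonneg hF0 (hind0 s))
            have h8 : Real.exp (ω * s) * ‖U (s - τ s)‖ * |k s|
                ≤ Real.exp (ω * τb) * (m s * |k s|) := by
              calc Real.exp (ω * s) * ‖U (s - τ s)‖ * |k s|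
                  ≤ (Real.exp (ω * τb) * m s) * |k s| :=
                    mul_le_mul_of_nonneg_right h6 (abs_nonneg _)
                _ = Real.exp (ω * τb) * (m s * |k s|) := by ring
            rw [mul_add]
            linarith
          · -- the delayed state lies in the history interval
            have hymem : s - τ s ∈ Icc (-τb) (0:ℝ) := ⟨by linarith [hτs.2], by linarith⟩
            have hUf : U (s - τ s) = f (s - τ s) := hhist _ hymem
            have h5 : Real.exp (ω * (s - τ s)) * ‖U (s - τ s)‖ ≤ F := by
              rw [hUf]; exact hFf _ hymem
            have hsmem : s ∈ Icc (0:ℝ) τb := ⟨hs0, by linarith [hτs.2]⟩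
            have hindeq : ind s = |k s| := Set.indicator_of_mem hsmem _
            have h6 : Real.exp (ω * s) * ‖U (s - τ s)‖ ≤ Real.exp (ω * τb) * F := by
              calc Real.exp (ω * s) * ‖U (s - τ s)‖
                  = Real.exp (ω * τ s) * (Real.exp (ω * (s - τ s)) * ‖U (s - τ s)‖) := by
                    rw [hexpsplit]; ring
                _ ≤ Real.exp (ω * τb) * F :=
                    mul_le_mul hexpτ h5 (by positivity) (Real.exp_nonneg _)
            have h7 : 0 ≤ Real.exp (ω * τb) * (m s * |k s|) :=
              mul_nonneg (Real.exp_nonneg _) (mul_nonneg (hm0 s) (abs_nonneg _))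
            have h8 : Real.exp (ω * s) * ‖U (s - τ s)‖ * |k s|
                ≤ Real.exp (ω * τb) * (F * |k s|) := by
              calc Real.exp (ω * s) * ‖U (s - τ s)‖ * |k s|
                  ≤ (Real.exp (ω * τb) * F) * |k s| :=
                    mul_le_mul_of_nonneg_right h6 (abs_nonneg _)
                _ = Real.exp (ω * τb) * (F * |k s|) := by ring
            rw [hindeq, mul_add]
            linarith
        -- put together
        have lhseq : Real.exp (ω * r) * D s
            = M * (Real.exp (ω * s) * ‖U s‖) * L
              + M * ‖B‖ * (Real.exp (ω * s) * ‖U (s - τ s)‖ * |k s|) := by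
          simp only [hDdef]
          linear_combination (M * L * ‖U s‖ + M * ‖B‖ * ‖U (s - τ s)‖ * |k s|) * hexps
        rw [lhseq]
        have hMB : 0 ≤ M * ‖B‖ := mul_nonneg hMpos.le (norm_nonneg _)
        have h9' : M * ‖B‖ * (Real.exp (ω * s) * ‖U (s - τ s)‖ * |k s|)
            ≤ c * |k s| * m s + c * F * ind s := by
          calc M * ‖B‖ * (Real.exp (ω * s) * ‖U (s - τ s)‖ * |k s|)
              ≤ M * ‖B‖ * (Real.exp (ω * τb) * (m s * |k s| + F * ind s)) :=
                mul_le_mul_of_nonneg_left hdel hMB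
            _ = c * |k s| * m s + c * F * ind s := by rw [hcdef]; ring
        have h10' : M * (Real.exp (ω * s) * ‖U s‖) * L ≤ M * L * m s := by
          calc M * (Real.exp (ω * s) * ‖U s‖) * L
              ≤ M * m s * L :=
                mul_le_mul_of_nonneg_right (mul_le_mul_of_nonneg_left hA hMpos.le) hL0
            _ = M * L * m s := by ring
        have hgms : g s * m s = M * L * m s + c * |k s| * m s := by
          simp only [hgdef]; ring
        rw [hgms]
        linarith
    -- integral of the indicator part is at most K
    have hindK : (∫ s in (0:ℝ)..r, ind s) ≤ K := by
      rw [intervalIntegral.integral_of_le hr]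
      have h1 : ∫ s in Ioc (0:ℝ) r, ind s = ∫ s in Icc (0:ℝ) τb ∩ Ioc 0 r, |k s| := by
        rw [hinddef, integral_indicator measurableSet_Icc,
          Measure.restrict_restrict measurableSet_Icc]
      rw [h1]
      have h2 : (∫ s in Icc (0:ℝ) τb ∩ Ioc 0 r, |k s|) ≤ ∫ s in Ioc (0:ℝ) τb, |k s| := by
        apply setIntegral_mono_set
        · have := intervalIntegrable_iff.mp (hkabs 0 τb)
          rwa [uIoc_of_le hτb0] at this
        · exact Filter.Eventually.of_forall fun s => abs_nonneg (k s)
        · refine HasSubset.Subset.eventuallyLE fun x hx => ?_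
          exact ⟨hx.2.1, hx.1.2⟩
      refine h2.trans ?_
      have h3 := hkK τb hτb0
      rw [show τb - τb = (0:ℝ) by ring, intervalIntegral.integral_of_le hτb0] at h3
      exact h3
    have step4 : (∫ s in (0:ℝ)..r, (g s * m s + (c * F) * ind s))
        ≤ (∫ s in (0:ℝ)..r, g s * m s) + c * K * F := by
      rw [intervalIntegral.integral_add (hgm 0 r) (hindint.const_mul (c * F)),
        intervalIntegral.integral_const_mul]
      have := mul_le_mul_of_nonneg_left hindK (mul_nonneg hc0 hF0)
      nlinarith
    linarith [step2, step3, step4]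
  -- the supremum function also satisfies the integral inequality
  have hmkey : ∀ r, 0 ≤ r → r ≤ t →
      m r ≤ (M * ‖f 0‖ + c * K * F) + ∫ s in (0:ℝ)..r, g s * m s := by
    intro r hr _
    have hint0 : 0 ≤ ∫ s in (0:ℝ)..r, g s * m s :=
      intervalIntegral.integral_nonneg hr (fun x _ => mul_nonneg (hg0 x) (hm0 x))
    apply Real.sSup_le
    · rintro x ⟨u, hu, rfl⟩
      refine (hφkey u hu.1).trans (add_le_add le_rfl ?_)
      have hadd := intervalIntegral.integral_add_adjacent_intervals (hgm 0 u) (hgm u r)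
      have h2 : 0 ≤ ∫ s in u..r, g s * m s :=
        intervalIntegral.integral_nonneg hu.2 (fun x _ => mul_nonneg (hg0 x) (hm0 x))
      linarith
    · linarith
  have hmain := gronwall_aux g m (M * ‖f 0‖ + c * K * F) t ha0 ht hg0 hgint hmmono hm0 hgm hmkey
  -- compute the integral of g
  have hGt : (∫ s in (0:ℝ)..t, g s) = M * L * t + c * ∫ s in (0:ℝ)..t, |k s| := by
    simp only [hgdef]
    rw [intervalIntegral.integral_add intervalIntegrable_const ((hkabs 0 t).const_mul c),
      intervalIntegral.integral_const, intervalIntegral.integral_const_mul]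
    simp [smul_eq_mul]
    ring
  have hlin' := hlin t ht
  have h5 : (∫ s in (0:ℝ)..t, g s) ≤ M * L * t + (γ + ω' * t) := by
    rw [hGt]
    have : c * (∫ s in (0:ℝ)..t, |k s|) ≤ γ + ω' * t := by
      rw [hcdef]; exact hlin'
    linarith
  have h6 : m t ≤ (M * ‖f 0‖ + c * K * F) * Real.exp (M * L * t + (γ + ω' * t)) :=
    hmain.trans (mul_le_mul_of_nonneg_left (Real.exp_le_exp.mpr h5) ha0)
  have h7 : φ t ≤ m t := hφm t t ht le_rfl
  have hUeq : ‖U t‖ = φ t * Real.exp (-(ω * t)) := by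
    have : Real.exp (ω * t) * Real.exp (-(ω * t)) = 1 := by
      rw [← Real.exp_add]; simp
    calc ‖U t‖ = ‖U t‖ * (Real.exp (ω * t) * Real.exp (-(ω * t))) := by rw [this, mul_one]
      _ = φ t * Real.exp (-(ω * t)) := by simp only [hφdef]; ring
  have key : ‖U t‖ ≤ (M * ‖f 0‖ + c * K * F)
      * Real.exp (M * L * t + (γ + ω' * t)) * Real.exp (-(ω * t)) := by
    rw [hUeq]
    exact mul_le_mul_of_nonneg_right (h7.trans h6) (Real.exp_nonneg _)
  have hexpid : Real.exp (M * L * t + (γ + ω' * t)) * Real.exp (-(ω * t))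
      = Real.exp γ * Real.exp (-(ω - ω' - M * L) * t) := by
    rw [← Real.exp_add, ← Real.exp_add]; ring_nf
  have hcoef : (M * ‖f 0‖ + c * K * F) * (Real.exp γ * Real.exp (-(ω - ω' - M * L) * t))
      = M * Real.exp γ * (‖f 0‖ + Real.exp (ω * τb) * K * ‖B‖ * F)
        * Real.exp (-(ω - ω' - M * L) * t) := by
    rw [hcdef]; ring
  calc ‖U t‖ ≤ (M * ‖f 0‖ + c * K * F)
        * Real.exp (M * L * t + (γ + ω' * t)) * Real.exp (-(ω * t)) := key
    _ = (M * ‖f 0‖ + c * K * F) * (Real.exp γ * Real.exp (-(ω - ω' - M * L) * t)) := by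
        rw [mul_assoc, hexpid]
    _ = M * Real.exp γ * (‖f 0‖ + Real.exp (ω * τb) * K * ‖B‖ * F)
        * Real.exp (-(ω - ω' - M * L) * t) := hcoef
end
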